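/- arXiv:1004.1500 — 7 statements merged into one kernel-verified Lean document; each statement's English description precedes it below -/
import Mathlib

section
/- Let Z be a real n×n Z-matrix. Then Z is an M-matrix if and only if Z admits a representation Z = N − P, where N is a nonsingular M-matrix, P ≥ 0 entrywise, and ρ(N⁻¹P) ≤ 1. -/
open Matrix Filter Topology Finset
open scoped NNReal ENNReal

/-- The spectral radius of a real square matrix: the supremum of the norms of
its complex eigenvalues. -/
noncomputable def specRad {n : ℕ} (A : Matrix (Fin n) (Fin n) ℝ) : ℝ :=
  sSup {r : ℝ | ∃ μ ∈ spectrum ℂ (A.map (Complex.ofReal)), ‖μ‖ = r}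

/-- A real square matrix is a Z-matrix if its off-diagonal entries are nonpositive. -/
def IsZMat {n : ℕ} (A : Matrix (Fin n) (Fin n) ℝ) : Prop :=
  ∀ i j, i ≠ j → A i j ≤ 0

/-- An M-matrix: a matrix of the form `s • 1 - P` with `P ≥ 0` and `ρ(P) ≤ s`. -/
def IsMMat {n : ℕ} (A : Matrix (Fin n) (Fin n) ℝ) : Prop :=
  ∃ (s : ℝ) (P : Matrix (Fin n) (Fin n) ℝ),
    (∀ i j, 0 ≤ P i j) ∧ specRad P ≤ s ∧ A = s • (1 : Matrix (Fin n) (Fin n) ℝ) - P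

/-- A nonsingular M-matrix: an M-matrix that is invertible. -/
def IsNsMMat {n : ℕ} (A : Matrix (Fin n) (Fin n) ℝ) : Prop :=
  IsMMat A ∧ IsUnit A.det

namespace MMAux

attribute [local instance] Matrix.linftyOpSeminormedAddCommGroup Matrix.linftyOpNormedAddCommGroup Matrix.linftyOpNormedRing Matrix.linftyOpNormedAlgebra

noncomputable instance (n : ℕ) : CompleteSpace (Matrix (Fin n) (Fin n) ℂ) :=
  FiniteDimensional.complete ℂ _

variable {n : ℕ}

/-- complexification -/
abbrev cm (A : Matrix (Fin n) (Fin n) ℝ) : Matrix (Fin n) (Fin n) ℂ :=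
  A.map Complex.ofReal

/-- spectral radius of a complex matrix -/
noncomputable def specRadC (B : Matrix (Fin n) (Fin n) ℂ) : ℝ :=
  sSup {r : ℝ | ∃ μ ∈ spectrum ℂ B, ‖μ‖ = r}

lemma specRad_eq (A : Matrix (Fin n) (Fin n) ℝ) : specRad A = specRadC (cm A) := rfl

lemma cm_apply (A : Matrix (Fin n) (Fin n) ℝ) (i j : Fin n) : cm A i j = (A i j : ℂ) := rfl

lemma cm_one : cm (1 : Matrix (Fin n) (Fin n) ℝ) = 1 := by
  ext i j; by_cases h : i = j <;> simp [cm_apply, Matrix.one_apply, h]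

lemma cm_mul (A B : Matrix (Fin n) (Fin n) ℝ) : cm (A * B) = cm A * cm B := by
  ext i j; simp [cm_apply, Matrix.mul_apply]

lemma cm_pow (A : Matrix (Fin n) (Fin n) ℝ) (k : ℕ) : cm (A ^ k) = cm A ^ k := by
  induction k with
  | zero => simpa using cm_one
  | succ k ih => rw [pow_succ, pow_succ, cm_mul, ih]

lemma cm_sub (A B : Matrix (Fin n) (Fin n) ℝ) : cm (A - B) = cm A - cm B := by
  ext i j; simp [cm_apply, Matrix.sub_apply]

lemma cm_smul (r : ℝ) (A : Matrix (Fin n) (Fin n) ℝ) : cm (r • A) = (r : ℂ) • cm A := by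
  ext i j; simp [cm_apply, Matrix.smul_apply]

lemma cm_sum (s : Finset ℕ) (f : ℕ → Matrix (Fin n) (Fin n) ℝ) :
    cm (∑ k ∈ s, f k) = ∑ k ∈ s, cm (f k) := by
  ext i j; simp [cm_apply, Matrix.sum_apply]

lemma cm_det (A : Matrix (Fin n) (Fin n) ℝ) : (cm A).det = (A.det : ℂ) :=
  (RingHom.map_det Complex.ofRealHom A).symm

lemma isUnit_cm_det_iff {A : Matrix (Fin n) (Fin n) ℝ} :
    IsUnit (cm A).det ↔ IsUnit A.det := by
  rw [cm_det, isUnit_iff_ne_zero, isUnit_iff_ne_zero, ne_eq, Complex.ofReal_eq_zero]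

/-- spectrum membership via determinant -/
lemma mem_spec_iff_det {B : Matrix (Fin n) (Fin n) ℂ} {μ : ℂ} :
    μ ∈ spectrum ℂ B ↔ (μ • (1 : Matrix (Fin n) (Fin n) ℂ) - B).det = 0 := by
  simp [spectrum.mem_iff, Algebra.algebraMap_eq_smul_one, Matrix.isUnit_iff_isUnit_det,
    isUnit_iff_ne_zero]

/-- spectrum membership via eigenvector -/
lemma mem_spec_iff_vec {B : Matrix (Fin n) (Fin n) ℂ} {μ : ℂ} :
    μ ∈ spectrum ℂ B ↔ ∃ v ≠ 0, B.mulVec v = μ • v := by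
  rw [mem_spec_iff_det, ← Matrix.exists_mulVec_eq_zero_iff]
  refine exists_congr fun v => and_congr_right fun hv => ?_
  rw [Matrix.sub_mulVec, Matrix.smul_mulVec, Matrix.one_mulVec, sub_eq_zero, eq_comm]

lemma spec_finite (B : Matrix (Fin n) (Fin n) ℂ) : (spectrum ℂ B).Finite :=
  Matrix.finite_spectrum B

lemma specSet_eq (B : Matrix (Fin n) (Fin n) ℂ) :
    {r : ℝ | ∃ μ ∈ spectrum ℂ B, ‖μ‖ = r} = norm '' (spectrum ℂ B) := by
  ext r; simp [Set.mem_image]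

lemma norm_le_specRadC {B : Matrix (Fin n) (Fin n) ℂ} {μ : ℂ} (h : μ ∈ spectrum ℂ B) :
    ‖μ‖ ≤ specRadC B := by
  apply le_csSup
  · rw [specSet_eq]; exact ((spec_finite B).image _).bddAbove
  · exact ⟨μ, h, rfl⟩

lemma specRadC_nonneg (B : Matrix (Fin n) (Fin n) ℂ) : 0 ≤ specRadC B :=
  Real.sSup_nonneg (by rintro r ⟨μ, _, rfl⟩; positivity)

lemma specRadC_le {B : Matrix (Fin n) (Fin n) ℂ} {c : ℝ}
    (h : ∀ μ ∈ spectrum ℂ B, ‖μ‖ ≤ c) (hc : 0 ≤ c) : specRadC B ≤ c :=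
  Real.sSup_le (by rintro r ⟨μ, hμ, rfl⟩; exact h μ hμ) hc

lemma exists_norm_eq_specRadC {B : Matrix (Fin n) (Fin n) ℂ}
    (hne : (spectrum ℂ B).Nonempty) : ∃ μ ∈ spectrum ℂ B, ‖μ‖ = specRadC B := by
  have h1 : {r : ℝ | ∃ μ ∈ spectrum ℂ B, ‖μ‖ = r}.Nonempty := ⟨‖hne.choose‖, hne.choose, hne.choose_spec, rfl⟩
  have h2 : {r : ℝ | ∃ μ ∈ spectrum ℂ B, ‖μ‖ = r}.Finite := by
    rw [specSet_eq]; exact (spec_finite B).image _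
  have := h1.csSup_mem h2
  exact this

lemma spectralRadius_eq (B : Matrix (Fin n) (Fin n) ℂ) :
    spectralRadius ℂ B = ENNReal.ofReal (specRadC B) := by
  rcases Set.eq_empty_or_nonempty (spectrum ℂ B) with h | h
  · have h2 : specRadC B = 0 := by
      unfold specRadC
      rw [show {r : ℝ | ∃ μ ∈ spectrum ℂ B, ‖μ‖ = r} = ∅ by simp [h], Real.sSup_empty]
    rw [h2, spectralRadius, h]
    simp
  · obtain ⟨lam, hlam, hnorm⟩ := exists_norm_eq_specRadC h
    apply le_antisymm
    · rw [spectralRadius]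
      refine iSup₂_le fun μ hμ => ?_
      rw [← ENNReal.ofReal_coe_nnreal, coe_nnnorm]
      exact ENNReal.ofReal_le_ofReal (norm_le_specRadC hμ)
    · rw [← hnorm, ← coe_nnnorm, ENNReal.ofReal_coe_nnreal]
      exact le_iSup₂ (f := fun μ _ => (‖μ‖₊ : ENNReal)) lam hlam

lemma geom_bound {B : Matrix (Fin n) (Fin n) ℂ} {c : ℝ} (hc : specRadC B < c) :
    ∀ᶠ k in atTop, ‖B ^ k‖ ≤ c ^ k := by
  have hc0 : (0:ℝ) < c := lt_of_le_of_lt (specRadC_nonneg B) hc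
  have hlt : spectralRadius ℂ B < ENNReal.ofReal c := by
    rw [spectralRadius_eq]
    exact (ENNReal.ofReal_lt_ofReal_iff hc0).mpr hc
  have hten := spectrum.pow_nnnorm_pow_one_div_tendsto_nhds_spectralRadius B
  have hev : ∀ᶠ k : ℕ in atTop, (‖B ^ k‖₊ : ENNReal) ^ (1 / (k:ℝ)) < ENNReal.ofReal c :=
    hten.eventually_lt_const hlt
  filter_upwards [hev, eventually_ge_atTop 1] with k hk hk1
  have hk0 : (k:ℝ) ≠ 0 := by positivity
  have h2 : ((‖B ^ k‖₊ : ENNReal) ^ (1 / (k:ℝ))) ^ (k:ℝ) ≤ (ENNReal.ofReal c) ^ (k:ℝ) :=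
    ENNReal.rpow_le_rpow hk.le (by positivity)
  rw [← ENNReal.rpow_mul, one_div, inv_mul_cancel₀ hk0, ENNReal.rpow_one] at h2
  have h3 : (ENNReal.ofReal c) ^ ((k:ℝ)) = ENNReal.ofReal (c ^ k) := by
    rw [ENNReal.rpow_natCast, ← ENNReal.ofReal_pow hc0.le]
  rw [h3, ← ENNReal.ofReal_coe_nnreal, coe_nnnorm] at h2
  exact (ENNReal.ofReal_le_ofReal_iff (by positivity)).mp h2


section NormLemmas

variable {α β : Type*} [SeminormedAddCommGroup α] [SeminormedAddCommGroup β]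

lemma norm_entry_le_norm (A : Matrix (Fin n) (Fin n) α) (i j : Fin n) : ‖A i j‖ ≤ ‖A‖ := by
  rw [Matrix.linfty_opNorm_def]
  have h1 : ‖A i j‖₊ ≤ ∑ j', ‖A i j'‖₊ :=
    Finset.single_le_sum (f := fun j' => ‖A i j'‖₊) (fun k _ => zero_le) (Finset.mem_univ j)
  have h2 : (∑ j', ‖A i j'‖₊) ≤ (Finset.univ : Finset (Fin n)).sup fun i => ∑ j', ‖A i j'‖₊ :=
    Finset.le_sup (f := fun i => ∑ j', ‖A i j'‖₊) (Finset.mem_univ i)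
  calc ‖A i j‖ = ((‖A i j‖₊ : ℝ≥0) : ℝ) := (coe_nnnorm _).symm
    _ ≤ _ := NNReal.coe_le_coe.mpr (h1.trans h2)

lemma norm_le_of_entry_le (A : Matrix (Fin n) (Fin n) α) (B : Matrix (Fin n) (Fin n) β)
    (h : ∀ i j, ‖A i j‖ ≤ ‖B i j‖) : ‖A‖ ≤ ‖B‖ := by
  rw [Matrix.linfty_opNorm_def, Matrix.linfty_opNorm_def]
  refine NNReal.coe_le_coe.mpr (Finset.sup_mono_fun fun i _ => Finset.sum_le_sum fun j _ => ?_)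
  have := h i j
  rwa [← coe_nnnorm, ← coe_nnnorm, NNReal.coe_le_coe] at this

lemma norm_le_sum_entries (A : Matrix (Fin n) (Fin n) α) :
    ‖A‖ ≤ ∑ i, ∑ j, ‖A i j‖ := by
  rw [Matrix.linfty_opNorm_def]
  have h1 : ((Finset.univ : Finset (Fin n)).sup fun i => ∑ j, ‖A i j‖₊)
      ≤ ∑ i, ∑ j, ‖A i j‖₊ :=
    Finset.sup_le fun i _ => Finset.single_le_sum (f := fun i => ∑ j, ‖A i j‖₊)
      (fun k _ => zero_le) (Finset.mem_univ i)
  have h2 := NNReal.coe_le_coe.mpr h1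
  simpa [NNReal.coe_sum] using h2

lemma tendsto_entry {f : ℕ → Matrix (Fin n) (Fin n) α} {X : Matrix (Fin n) (Fin n) α}
    (h : Tendsto f atTop (𝓝 X)) (i j : Fin n) :
    Tendsto (fun m => f m i j) atTop (𝓝 (X i j)) := by
  erw [tendsto_iff_norm_sub_tendsto_zero] at h ⊢
  refine squeeze_zero (fun m => norm_nonneg _) (fun m => ?_) h
  exact norm_entry_le_norm (f m - X) i j

lemma tendsto_of_tendsto_entries {f : ℕ → Matrix (Fin n) (Fin n) α} {X : Matrix (Fin n) (Fin n) α}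
    (h : ∀ i j, Tendsto (fun m => f m i j) atTop (𝓝 (X i j))) :
    Tendsto f atTop (𝓝 X) := by
  erw [tendsto_iff_norm_sub_tendsto_zero]
  have hsum : Tendsto (fun m => ∑ i, ∑ j, ‖(f m - X) i j‖) atTop (𝓝 0) := by
    have : Tendsto (fun m => ∑ i, ∑ j, ‖(f m - X) i j‖) atTop (𝓝 (∑ i : Fin n, ∑ j : Fin n, (0:ℝ))) := by
      refine tendsto_finset_sum _ fun i _ => tendsto_finset_sum _ fun j _ => ?_
      have := (h i j).sub_const (X i j)
      rw [sub_self] at this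
      simpa [tendsto_iff_norm_sub_tendsto_zero] using
        (tendsto_iff_norm_sub_tendsto_zero.mp ((h i j)))
    simpa using this
  exact squeeze_zero (fun m => norm_nonneg _) (fun m => norm_le_sum_entries _) hsum

end NormLemmas

lemma cm_norm (A : Matrix (Fin n) (Fin n) ℝ) : ‖cm A‖ = ‖A‖ := by
  rw [Matrix.linfty_opNorm_def, Matrix.linfty_opNorm_def]
  congr 1
  refine Finset.sup_congr rfl fun i _ => Finset.sum_congr rfl fun j _ => ?_
  simp [cm_apply]

/-- partial sums of the Neumann series -/
noncomputable def psum (B : Matrix (Fin n) (Fin n) ℂ) (z : ℂ) (m : ℕ) :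
    Matrix (Fin n) (Fin n) ℂ :=
  ∑ k ∈ Finset.range m, z⁻¹ ^ (k+1) • B ^ k

lemma key_identity (B : Matrix (Fin n) (Fin n) ℂ) {z : ℂ} (hz : z ≠ 0) (m : ℕ) :
    (z • (1 : Matrix (Fin n) (Fin n) ℂ) - B) * psum B z m = 1 - z⁻¹ ^ m • B ^ m := by
  induction m with
  | zero => simp [psum]
  | succ m ih =>
    rw [psum, Finset.sum_range_succ, ← psum, mul_add, ih, mul_smul_comm, sub_mul,
      Matrix.smul_mul, Matrix.one_mul, ← pow_succ']
    have hsc : z⁻¹ ^ (m+1) * z = z⁻¹ ^ m := by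
      rw [pow_succ, mul_assoc, inv_mul_cancel₀ hz, mul_one]
    rw [smul_sub, smul_smul, hsc]
    abel

lemma not_mem_spec_of_lt {B : Matrix (Fin n) (Fin n) ℂ} {z : ℂ}
    (h : specRadC B < ‖z‖) : z ∉ spectrum ℂ B :=
  fun hz => absurd (norm_le_specRadC hz) (not_le.mpr h)

lemma isUnit_det_of_lt {B : Matrix (Fin n) (Fin n) ℂ} {z : ℂ} (h : specRadC B < ‖z‖) :
    IsUnit (z • (1 : Matrix (Fin n) (Fin n) ℂ) - B).det := by
  rw [isUnit_iff_ne_zero]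
  exact fun h0 => not_mem_spec_of_lt h (mem_spec_iff_det.mpr h0)

lemma neumann_tendsto {B : Matrix (Fin n) (Fin n) ℂ} {z : ℂ} (h : specRadC B < ‖z‖) :
    Tendsto (psum B z) atTop (𝓝 (z • (1 : Matrix (Fin n) (Fin n) ℂ) - B)⁻¹) := by
  have hz0 : z ≠ 0 := by
    intro h0; rw [h0, norm_zero] at h; exact absurd (specRadC_nonneg B) (not_le.mpr h)
  have hdet := isUnit_det_of_lt h
  set M := z • (1 : Matrix (Fin n) (Fin n) ℂ) - B with hM
  have hps : ∀ m, psum B z m = M⁻¹ - z⁻¹ ^ m • (M⁻¹ * B ^ m) := by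
    intro m
    have h1 : M⁻¹ * (M * psum B z m) = psum B z m := by
      rw [← Matrix.mul_assoc, Matrix.nonsing_inv_mul _ hdet, Matrix.one_mul]
    rw [key_identity B hz0 m] at h1
    rw [← h1, Matrix.mul_sub, Matrix.mul_one, Matrix.mul_smul]
  obtain ⟨c, hc1, hc2⟩ := exists_between h
  have hc0 : 0 < c := lt_of_le_of_lt (specRadC_nonneg B) hc1
  have hgeom : Tendsto (fun m : ℕ => ‖M⁻¹‖ * (c / ‖z‖) ^ m) atTop (𝓝 0) := by
    have h1 : c / ‖z‖ < 1 := by rw [div_lt_one (hc0.trans hc2)]; exact hc2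
    have h2 := (tendsto_pow_atTop_nhds_zero_of_lt_one (by positivity) h1).const_mul ‖M⁻¹‖
    rw [mul_zero] at h2
    exact h2
  have hzero : Tendsto (fun m : ℕ => z⁻¹ ^ m • (M⁻¹ * B ^ m)) atTop (𝓝 0) := by
    refine squeeze_zero_norm' ?_ hgeom
    filter_upwards [geom_bound hc1] with m hm
    have h1 : ‖z⁻¹ ^ m • (M⁻¹ * B ^ m)‖ ≤ ‖z‖⁻¹ ^ m * (‖M⁻¹‖ * ‖B ^ m‖) := by
      rw [norm_smul, norm_pow, norm_inv]
      exact mul_le_mul_of_nonneg_left (norm_mul_le _ _) (by positivity)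
    refine h1.trans ?_
    have h2 : ‖z‖⁻¹ ^ m * (‖M⁻¹‖ * ‖B ^ m‖) ≤ ‖z‖⁻¹ ^ m * (‖M⁻¹‖ * c ^ m) := by
      have := mul_le_mul_of_nonneg_left hm (norm_nonneg M⁻¹)
      exact mul_le_mul_of_nonneg_left this (by positivity)
    refine h2.trans (le_of_eq ?_)
    rw [div_pow, inv_pow]
    ring
  have : Tendsto (fun m => M⁻¹ - z⁻¹ ^ m • (M⁻¹ * B ^ m)) atTop (𝓝 (M⁻¹ - 0)) :=
    tendsto_const_nhds.sub hzero
  rw [sub_zero] at this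
  exact this.congr fun m => (hps m).symm

/-- real partial sums -/
noncomputable def rpsum (A : Matrix (Fin n) (Fin n) ℝ) (s : ℝ) (m : ℕ) :
    Matrix (Fin n) (Fin n) ℝ :=
  ∑ k ∈ Finset.range m, s⁻¹ ^ (k+1) • A ^ k

lemma cm_rpsum (A : Matrix (Fin n) (Fin n) ℝ) (s : ℝ) (m : ℕ) :
    cm (rpsum A s m) = psum (cm A) (s : ℂ) m := by
  rw [rpsum, psum, cm_sum]
  refine Finset.sum_congr rfl fun k _ => ?_
  rw [cm_smul, cm_pow]
  push_cast
  rfl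

lemma cm_shift (A : Matrix (Fin n) (Fin n) ℝ) (s : ℝ) :
    cm (s • (1 : Matrix (Fin n) (Fin n) ℝ) - A)
      = (s : ℂ) • (1 : Matrix (Fin n) (Fin n) ℂ) - cm A := by
  rw [cm_sub, cm_smul, cm_one]

lemma real_isUnit_det (A : Matrix (Fin n) (Fin n) ℝ) {s : ℝ} (h : specRad A < s) :
    IsUnit (s • (1 : Matrix (Fin n) (Fin n) ℝ) - A).det := by
  have h0 : 0 ≤ specRad A := specRadC_nonneg (cm A)
  have hs : specRadC (cm A) < ‖(s : ℂ)‖ := by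
    rw [Complex.norm_real, Real.norm_eq_abs, abs_of_pos (lt_of_le_of_lt h0 h)]
    exact h
  have := isUnit_det_of_lt hs
  rw [← cm_shift, cm_det] at this
  exact isUnit_cm_det_iff.mp (by rwa [cm_det])

lemma cm_inv (A : Matrix (Fin n) (Fin n) ℝ) (h : IsUnit A.det) :
    (cm A)⁻¹ = cm A⁻¹ := by
  apply Matrix.inv_eq_right_inv
  rw [← cm_mul, Matrix.mul_nonsing_inv _ h, cm_one]

lemma real_neumann_tendsto (A : Matrix (Fin n) (Fin n) ℝ) {s : ℝ} (h : specRad A < s) :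
    Tendsto (rpsum A s) atTop (𝓝 (s • (1 : Matrix (Fin n) (Fin n) ℝ) - A)⁻¹) := by
  have h0 : 0 ≤ specRad A := specRadC_nonneg (cm A)
  have hs : specRadC (cm A) < ‖(s : ℂ)‖ := by
    rw [Complex.norm_real, Real.norm_eq_abs, abs_of_pos (lt_of_le_of_lt h0 h)]
    exact h
  have hC := neumann_tendsto hs
  rw [← cm_shift, cm_inv _ (real_isUnit_det A h)] at hC
  apply tendsto_of_tendsto_entries
  intro i j
  have hij := tendsto_entry hC i j
  have heq : ∀ m, psum (cm A) (s : ℂ) m i j = ((rpsum A s m i j : ℝ) : ℂ) := by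
    intro m; rw [← cm_rpsum]; rfl
  rw [show (cm (s • (1 : Matrix (Fin n) (Fin n) ℝ) - A)⁻¹) i j
      = (((s • (1 : Matrix (Fin n) (Fin n) ℝ) - A)⁻¹ i j : ℝ) : ℂ) from rfl] at hij
  have := (Complex.continuous_re.tendsto _).comp (hij.congr heq)
  simpa [Function.comp_def] using this

section Entrywise

variable {A B C D : Matrix (Fin n) (Fin n) ℝ}

lemma mul_entry_nonneg (hA : ∀ i j, 0 ≤ A i j) (hB : ∀ i j, 0 ≤ B i j) :
    ∀ i j, 0 ≤ (A * B) i j := by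
  intro i j
  rw [Matrix.mul_apply]
  exact Finset.sum_nonneg fun k _ => mul_nonneg (hA i k) (hB k j)

lemma pow_entry_nonneg (hA : ∀ i j, 0 ≤ A i j) (k : ℕ) : ∀ i j, 0 ≤ (A ^ k) i j := by
  induction k with
  | zero => intro i j; by_cases h : i = j <;> simp [pow_zero, Matrix.one_apply, h]
  | succ k ih => rw [pow_succ]; exact mul_entry_nonneg ih hA

lemma mul_entry_le (hA : ∀ i j, 0 ≤ A i j) (hC : ∀ i j, 0 ≤ C i j)
    (hAB : ∀ i j, A i j ≤ B i j) (hCD : ∀ i j, C i j ≤ D i j) :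
    ∀ i j, (A * C) i j ≤ (B * D) i j := by
  intro i j
  rw [Matrix.mul_apply, Matrix.mul_apply]
  refine Finset.sum_le_sum fun k _ => ?_
  exact mul_le_mul (hAB i k) (hCD k j) (hC k j) (le_trans (hA i k) (hAB i k))

lemma pow_entry_le (hA : ∀ i j, 0 ≤ A i j) (hAB : ∀ i j, A i j ≤ B i j) (k : ℕ) :
    ∀ i j, (A ^ k) i j ≤ (B ^ k) i j := by
  induction k with
  | zero => intro i j; exact le_rfl
  | succ k ih =>
    rw [pow_succ, pow_succ]
    exact mul_entry_le (pow_entry_nonneg hA k) hA ih hAB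

lemma nonneg_norm_le (hA : ∀ i j, 0 ≤ A i j) (hAB : ∀ i j, A i j ≤ B i j) : ‖A‖ ≤ ‖B‖ := by
  refine norm_le_of_entry_le A B fun i j => ?_
  rw [Real.norm_eq_abs, Real.norm_eq_abs, abs_of_nonneg (hA i j),
    abs_of_nonneg (le_trans (hA i j) (hAB i j))]
  exact hAB i j

end Entrywise

lemma specRad_mono {A B : Matrix (Fin n) (Fin n) ℝ} (hA : ∀ i j, 0 ≤ A i j)
    (hAB : ∀ i j, A i j ≤ B i j) : specRad A ≤ specRad B := by
  have h0 : 0 ≤ specRad B := specRadC_nonneg (cm B)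
  rw [← ENNReal.ofReal_le_ofReal_iff h0, specRad_eq, specRad_eq, ← spectralRadius_eq,
    ← spectralRadius_eq]
  refine le_of_tendsto_of_tendsto'
    (spectrum.pow_nnnorm_pow_one_div_tendsto_nhds_spectralRadius (cm A))
    (spectrum.pow_nnnorm_pow_one_div_tendsto_nhds_spectralRadius (cm B)) fun k => ?_
  refine ENNReal.rpow_le_rpow ?_ (by positivity)
  rw [← cm_pow, ← cm_pow]
  norm_cast
  rw [← NNReal.coe_le_coe, coe_nnnorm, coe_nnnorm, cm_norm, cm_norm]
  exact nonneg_norm_le (pow_entry_nonneg hA k) (pow_entry_le hA hAB k)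

lemma specRad_smul_le (A : Matrix (Fin n) (Fin n) ℝ) {c : ℝ} (hc : 0 ≤ c) :
    specRad (c • A) ≤ c * specRad A := by
  have h0 : 0 ≤ c * specRad A := mul_nonneg hc (specRadC_nonneg (cm A))
  refine specRadC_le (fun μ hμ => ?_) h0
  obtain ⟨v, hv, hBv⟩ := mem_spec_iff_vec.mp hμ
  have hBv' : ((c:ℂ)) • ((cm A) *ᵥ v) = μ • v := by
    have h1 : cm (c • A) *ᵥ v = μ • v := hBv
    rwa [cm_smul, Matrix.smul_mulVec] at h1
  rcases eq_or_lt_of_le hc with hc0 | hc0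
  · rw [← hc0] at hBv' ⊢
    simp only [Complex.ofReal_zero, zero_smul, zero_mul] at hBv' ⊢
    rcases smul_eq_zero.mp hBv'.symm with h | h
    · rw [h, norm_zero]
    · exact absurd h hv
  · have hmem : μ / (c : ℂ) ∈ spectrum ℂ (cm A) := by
      rw [mem_spec_iff_vec]
      refine ⟨v, hv, ?_⟩
      have h2 : (cm A) *ᵥ v = ((c : ℂ))⁻¹ • (μ • v) := by
        rw [← hBv', smul_smul, inv_mul_cancel₀ (by exact_mod_cast hc0.ne'), one_smul]
      rw [h2, smul_smul, div_eq_inv_mul]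
    have h3 := norm_le_specRadC hmem
    rw [norm_div, Complex.norm_real, Real.norm_eq_abs, abs_of_pos hc0] at h3
    have h4 : ‖μ‖ / c ≤ specRad A := h3
    calc ‖μ‖ = c * (‖μ‖ / c) := by field_simp
      _ ≤ c * specRad A := mul_le_mul_of_nonneg_left h4 hc

lemma specRad_nonneg (A : Matrix (Fin n) (Fin n) ℝ) : 0 ≤ specRad A :=
  specRadC_nonneg (cm A)

lemma rpsum_entry_nonneg {A : Matrix (Fin n) (Fin n) ℝ} (hA : ∀ i j, 0 ≤ A i j) {s : ℝ}
    (hs : 0 < s) (m : ℕ) (i j : Fin n) : 0 ≤ rpsum A s m i j := by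
  simp only [rpsum, Matrix.sum_apply, Matrix.smul_apply, smul_eq_mul]
  exact Finset.sum_nonneg fun k _ =>
    mul_nonneg (by positivity) (pow_entry_nonneg hA k i j)

lemma inv_entry_nonneg {A : Matrix (Fin n) (Fin n) ℝ} (hA : ∀ i j, 0 ≤ A i j) {s : ℝ}
    (h : specRad A < s) :
    ∀ i j, 0 ≤ (s • (1 : Matrix (Fin n) (Fin n) ℝ) - A)⁻¹ i j := by
  intro i j
  have hs : 0 < s := lt_of_le_of_lt (specRad_nonneg A) h
  exact ge_of_tendsto' (tendsto_entry (real_neumann_tendsto A h) i j)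
    fun m => rpsum_entry_nonneg hA hs m i j

lemma inv_entry_le {A : Matrix (Fin n) (Fin n) ℝ} (hA : ∀ i j, 0 ≤ A i j) {t s : ℝ}
    (ht : specRad A < t) (hts : t ≤ s) :
    ∀ i j, (s • (1 : Matrix (Fin n) (Fin n) ℝ) - A)⁻¹ i j
      ≤ (t / s) * (t • (1 : Matrix (Fin n) (Fin n) ℝ) - A)⁻¹ i j := by
  intro i j
  have ht0 : 0 < t := lt_of_le_of_lt (specRad_nonneg A) ht
  have hs0 : 0 < s := lt_of_lt_of_le ht0 hts
  have h1 := tendsto_entry (real_neumann_tendsto A (lt_of_lt_of_le ht hts)) i j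
  have h2 := (tendsto_entry (real_neumann_tendsto A ht) i j).const_mul (t / s)
  refine le_of_tendsto_of_tendsto' h1 h2 fun m => ?_
  simp only [rpsum, Matrix.sum_apply, Matrix.smul_apply, smul_eq_mul, Finset.mul_sum]
  refine Finset.sum_le_sum fun k _ => ?_
  have hAk := pow_entry_nonneg hA k i j
  have key : s⁻¹ ^ (k+1) ≤ t / s * t⁻¹ ^ (k+1) := by
    have hpow : s⁻¹ ^ k ≤ t⁻¹ ^ k :=
      pow_le_pow_left₀ (by positivity) (one_div s ▸ one_div t ▸ one_div_le_one_div_of_le ht0 hts) k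
    calc s⁻¹ ^ (k+1) = s⁻¹ ^ k * s⁻¹ := pow_succ _ _
      _ ≤ t⁻¹ ^ k * s⁻¹ := mul_le_mul_of_nonneg_right hpow (by positivity)
      _ = t / s * t⁻¹ ^ (k+1) := by
          rw [pow_succ]
          field_simp
  calc s⁻¹ ^ (k+1) * (A ^ k) i j ≤ (t / s * t⁻¹ ^ (k+1)) * (A ^ k) i j :=
        mul_le_mul_of_nonneg_right key hAk
    _ = t / s * (t⁻¹ ^ (k+1) * (A ^ k) i j) := by ring

lemma psum_entry_norm_le {A : Matrix (Fin n) (Fin n) ℝ} (hA : ∀ i j, 0 ≤ A i j) {z : ℂ}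
    {s : ℝ} (hzs : ‖z‖ = s) (m : ℕ) (i j : Fin n) :
    ‖psum (cm A) z m i j‖ ≤ rpsum A s m i j := by
  have hs0 : 0 ≤ s := hzs ▸ norm_nonneg z
  simp only [psum, rpsum, Matrix.sum_apply, Matrix.smul_apply, smul_eq_mul]
  refine (norm_sum_le _ _).trans (Finset.sum_le_sum fun k _ => ?_)
  have h1 : ((cm A) ^ k) i j = (((A ^ k) i j : ℝ) : ℂ) := by rw [← cm_pow]; rfl
  rw [h1, norm_mul, norm_pow, norm_inv, hzs, Complex.norm_real, Real.norm_eq_abs,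
    abs_of_nonneg (pow_entry_nonneg hA k i j)]

/-- weak Perron-Frobenius: the spectral radius of an entrywise nonnegative matrix
belongs to its spectrum. -/
lemma specRad_mem_spectrum {A : Matrix (Fin n) (Fin n) ℝ} (hn : 0 < n)
    (hA : ∀ i j, 0 ≤ A i j) : ((specRad A : ℝ) : ℂ) ∈ spectrum ℂ (cm A) := by
  haveI : Nonempty (Fin n) := ⟨⟨0, hn⟩⟩
  have hne : (spectrum ℂ (cm A)).Nonempty := spectrum.nonempty (cm A)
  obtain ⟨lam, hlam, hnl⟩ := exists_norm_eq_specRadC hne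
  set r := specRad A with hr
  have hnl' : ‖lam‖ = r := hnl
  rcases eq_or_lt_of_le (specRad_nonneg A) with h0 | h0
  · have h1 : lam = 0 := norm_eq_zero.mp (by rw [hnl']; exact h0.symm)
    have hr0 : r = 0 := h0.symm
    have h2 : ((r : ℝ) : ℂ) = lam := by rw [h1, hr0]; norm_num
    rwa [h2]
  by_contra hmem
  -- r•1 - A is invertible over ℝ
  have hdetr : IsUnit (r • (1 : Matrix (Fin n) (Fin n) ℝ) - A).det := by
    rw [← isUnit_cm_det_iff, cm_shift, isUnit_iff_ne_zero]
    exact fun hd => hmem (mem_spec_iff_det.mpr hd)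
  have hu : IsUnit (r • (1 : Matrix (Fin n) (Fin n) ℝ) - A) :=
    (Matrix.isUnit_iff_isUnit_det _).mpr hdetr
  -- continuity of the resolvent at r
  set g : ℝ → Matrix (Fin n) (Fin n) ℝ := fun s => Ring.inverse (s • 1 - A) with hg
  have hcont : ContinuousAt g r := by
    have hMc : Continuous (fun s : ℝ => s • (1 : Matrix (Fin n) (Fin n) ℝ) - A) :=
      (continuous_id.smul continuous_const).sub continuous_const
    have h3 : ContinuousAt Ring.inverse (r • (1 : Matrix (Fin n) (Fin n) ℝ) - A) := by
      have := NormedRing.inverse_continuousAt hu.unit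
      rwa [IsUnit.unit_spec] at this
    exact ContinuousAt.comp (f := fun s : ℝ => s • (1 : Matrix (Fin n) (Fin n) ℝ) - A)
      (g := Ring.inverse) h3 hMc.continuousAt
  set C : ℝ := ‖g r‖ + 1 with hC
  have hC0 : 0 < C := lt_of_le_of_lt (norm_nonneg _) (lt_add_one _)
  have hevent : ∀ᶠ s : ℝ in 𝓝 r, ‖g s‖ < C := hcont.norm.eventually_lt_const (lt_add_one _)
  obtain ⟨δ, hδ0, hδ⟩ := Metric.eventually_nhds_iff.mp hevent
  -- choose s slightly above r
  set s : ℝ := r + min (δ / 2) (1 / (2 * C)) with hsdef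
  have hmin0 : 0 < min (δ / 2) (1 / (2 * C)) := lt_min (by positivity) (by positivity)
  have hrs : r < s := by rw [hsdef]; linarith
  have hgsC : ‖g s‖ < C := by
    apply hδ
    rw [Real.dist_eq, hsdef]
    have h4 : min (δ / 2) (1 / (2 * C)) ≤ δ / 2 := min_le_left _ _
    rw [abs_of_pos (by linarith)]
    linarith
  have hsr : s - r ≤ 1 / (2 * C) := by rw [hsdef]; simpa using min_le_right _ _
  -- the point z on the circle of radius s near lam
  set z : ℂ := ((s / r : ℝ) : ℂ) * lam with hz
  have hznorm : ‖z‖ = s := by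
    rw [hz, norm_mul, Complex.norm_real, Real.norm_eq_abs,
      abs_of_pos (by positivity : (0:ℝ) < s / r), hnl']
    have hr0 : r ≠ 0 := ne_of_gt h0
    exact div_mul_cancel₀ s hr0
  have hsz : specRadC (cm A) < ‖z‖ := by rw [hznorm]; exact hrs
  have hWdet : IsUnit ((z • (1 : Matrix (Fin n) (Fin n) ℂ)) - cm A).det := isUnit_det_of_lt hsz
  set W := ((z • (1 : Matrix (Fin n) (Fin n) ℂ)) - cm A)⁻¹ with hW
  -- lower bound for ‖W‖
  obtain ⟨v, hv, hAv⟩ := mem_spec_iff_vec.mp hlam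
  have hzl : ((z • (1 : Matrix (Fin n) (Fin n) ℂ)) - cm A) *ᵥ v = (z - lam) • v := by
    rw [Matrix.sub_mulVec, Matrix.smul_mulVec, Matrix.one_mulVec, hAv, sub_smul]
  have hvW : v = (z - lam) • (W *ᵥ v) := by
    have h5 : W *ᵥ (((z • (1 : Matrix (Fin n) (Fin n) ℂ)) - cm A) *ᵥ v) = v := by
      rw [Matrix.mulVec_mulVec, Matrix.nonsing_inv_mul _ hWdet, Matrix.one_mulVec]
    conv_lhs => rw [← h5, hzl]
    rw [Matrix.mulVec_smul]
  have hzlam : ‖z - lam‖ = s - r := by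
    have h6 : z - lam = (((s / r - 1 : ℝ)) : ℂ) * lam := by
      rw [hz]; push_cast; ring
    have hpos : (0:ℝ) < s / r - 1 := by
      rw [lt_sub_iff_add_lt, zero_add, lt_div_iff₀ h0]
      nlinarith [hrs]
    rw [h6, norm_mul, Complex.norm_real, Real.norm_eq_abs, hnl', abs_of_pos hpos]
    have hr0 : r ≠ 0 := ne_of_gt h0
    rw [sub_mul, div_mul_cancel₀ s hr0, one_mul]
  have hvpos : 0 < ‖v‖ := norm_pos_iff.mpr hv
  have hlow : 1 ≤ (s - r) * ‖W‖ := by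
    have h7 : ‖v‖ ≤ ‖z - lam‖ * (‖W‖ * ‖v‖) := by
      calc ‖v‖ = ‖(z - lam) • (W *ᵥ v)‖ := by rw [← hvW]
        _ = ‖z - lam‖ * ‖W *ᵥ v‖ := norm_smul _ _
        _ ≤ ‖z - lam‖ * (‖W‖ * ‖v‖) :=
            mul_le_mul_of_nonneg_left (Matrix.linfty_opNorm_mulVec _ _) (norm_nonneg _)
    rw [hzlam] at h7
    have h8 : ‖v‖ * 1 ≤ ‖v‖ * ((s - r) * ‖W‖) := by
      calc ‖v‖ * 1 = ‖v‖ := mul_one _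
        _ ≤ (s - r) * (‖W‖ * ‖v‖) := h7
        _ = ‖v‖ * ((s - r) * ‖W‖) := by ring
    exact le_of_mul_le_mul_left h8 hvpos
  -- upper bound for ‖W‖
  have hrsA : specRad A < s := lt_of_eq_of_lt hr.symm hrs
  have hWle : ‖W‖ ≤ ‖g s‖ := by
    have h9 : g s = (s • (1 : Matrix (Fin n) (Fin n) ℝ) - A)⁻¹ := by
      rw [hg, Matrix.nonsing_inv_eq_ringInverse]
    rw [h9]
    refine le_of_tendsto_of_tendsto' (neumann_tendsto hsz).norm
      (real_neumann_tendsto A hrsA).norm fun m => ?_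
    refine norm_le_of_entry_le _ _ fun i j => ?_
    have h10 := psum_entry_norm_le hA hznorm m i j
    have h11 : 0 ≤ rpsum A s m i j :=
      rpsum_entry_nonneg hA (lt_of_le_of_lt (specRad_nonneg A) hrsA) m i j
    rw [Real.norm_eq_abs, abs_of_nonneg h11]
    exact h10
  have hfinal : (1:ℝ) ≤ 1/2 := by
    calc (1:ℝ) ≤ (s - r) * ‖W‖ := hlow
      _ ≤ (s - r) * ‖g s‖ := mul_le_mul_of_nonneg_left hWle (by linarith)
      _ ≤ (s - r) * C := mul_le_mul_of_nonneg_left hgsC.le (by linarith)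
      _ ≤ (1 / (2 * C)) * C := mul_le_mul_of_nonneg_right hsr hC0.le
      _ = 1/2 := by
          field_simp
          try ring
  linarith

lemma spec_empty_of_n_zero (h : n = 0) (B : Matrix (Fin n) (Fin n) ℂ) :
    spectrum ℂ B = ∅ := by
  subst h
  ext μ
  simp [mem_spec_iff_det, Matrix.det_isEmpty]

lemma specRad_zero_of_n_zero (h : n = 0) (A : Matrix (Fin n) (Fin n) ℝ) :
    specRad A = 0 := by
  rw [specRad_eq, specRadC, spec_empty_of_n_zero h]
  simp [Real.sSup_empty]

lemma forward {Z : Matrix (Fin n) (Fin n) ℝ} (h : IsMMat Z) :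
    ∃ N P : Matrix (Fin n) (Fin n) ℝ,
      IsNsMMat N ∧ (∀ i j, 0 ≤ P i j) ∧ Z = N - P ∧ specRad (N⁻¹ * P) ≤ 1 := by
  obtain ⟨s, Q, hQ, hsr, hZ⟩ := h
  have hs0 : 0 ≤ s := le_trans (specRad_nonneg Q) hsr
  have hNrep : Z + 1 = (s+1) • (1 : Matrix (Fin n) (Fin n) ℝ) - Q := by
    rw [hZ, add_smul, one_smul]
    abel
  have hNdet : IsUnit (Z + 1 : Matrix (Fin n) (Fin n) ℝ).det := by
    rw [hNrep]
    exact real_isUnit_det Q (by linarith)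
  refine ⟨Z + 1, 1, ⟨⟨s+1, Q, hQ, by linarith, hNrep⟩, hNdet⟩, ?_, ?_, ?_⟩
  · intro i j; by_cases h : i = j <;> simp [Matrix.one_apply, h]
  · abel
  · rw [Matrix.mul_one]
    set N := Z + 1 with hN
    have hdetc : IsUnit (cm N).det := isUnit_cm_det_iff.mpr hNdet
    refine specRadC_le (fun μ hμ => ?_) zero_le_one
    obtain ⟨v, hv, hvec⟩ := mem_spec_iff_vec.mp hμ
    have hvec' : (cm N)⁻¹ *ᵥ v = μ • v := by
      rw [cm_inv N hNdet]
      exact hvec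
    have hv1 : (cm N) *ᵥ ((cm N)⁻¹ *ᵥ v) = v := by
      rw [Matrix.mulVec_mulVec, Matrix.mul_nonsing_inv _ hdetc, Matrix.one_mulVec]
    have hv2 : v = μ • ((cm N) *ᵥ v) := by
      conv_lhs => rw [← hv1, hvec']
      rw [Matrix.mulVec_smul]
    have hμ0 : μ ≠ 0 := by
      rintro rfl
      rw [zero_smul] at hv2
      exact hv hv2
    have hNv : (cm N) *ᵥ v = μ⁻¹ • v := by
      calc (cm N) *ᵥ v = μ⁻¹ • (μ • ((cm N) *ᵥ v)) := by
            rw [smul_smul, inv_mul_cancel₀ hμ0, one_smul]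
        _ = μ⁻¹ • v := by rw [← hv2]
    have hQv : cm Q *ᵥ v = (((s:ℂ)+1) - μ⁻¹) • v := by
      have hcmN : cm N = ((s+1:ℝ):ℂ) • (1 : Matrix (Fin n) (Fin n) ℂ) - cm Q := by
        rw [hNrep, cm_shift]
      rw [hcmN, Matrix.sub_mulVec, Matrix.smul_mulVec, Matrix.one_mulVec] at hNv
      have h7 : cm Q *ᵥ v = ((s+1:ℝ):ℂ) • v - μ⁻¹ • v := by
        rw [← hNv]; abel
      rw [h7, ← sub_smul]
      congr 1
      push_cast
      ring
    have hmem : ((s:ℂ)+1) - μ⁻¹ ∈ spectrum ℂ (cm Q) := mem_spec_iff_vec.mpr ⟨v, hv, hQv⟩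
    have hb : ‖((s:ℂ)+1) - μ⁻¹‖ ≤ s := le_trans (norm_le_specRadC hmem) hsr
    have h9 : ‖(s:ℂ)+1‖ = s + 1 := by
      rw [show ((s:ℂ)+1) = ((s+1:ℝ):ℂ) by push_cast; ring, Complex.norm_real,
        Real.norm_eq_abs, abs_of_pos (by linarith)]
    have hge : 1 ≤ ‖μ⁻¹‖ := by
      have h8 : ‖(s:ℂ)+1‖ - ‖μ⁻¹‖ ≤ ‖((s:ℂ)+1) - μ⁻¹‖ := norm_sub_norm_le _ _
      rw [h9] at h8
      linarith
    rw [norm_inv] at hge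
    have hpos : 0 < ‖μ‖ := norm_pos_iff.mpr hμ0
    have hcancel : ‖μ‖ * ‖μ‖⁻¹ = 1 := mul_inv_cancel₀ hpos.ne'
    nlinarith

lemma reverse {Z : Matrix (Fin n) (Fin n) ℝ}
    (h : ∃ N P : Matrix (Fin n) (Fin n) ℝ,
      IsNsMMat N ∧ (∀ i j, 0 ≤ P i j) ∧ Z = N - P ∧ specRad (N⁻¹ * P) ≤ 1) :
    IsMMat Z := by
  obtain ⟨N, P, ⟨⟨t, Q, hQ, htr, hNrep⟩, hNdet⟩, hP, hZNP, hH⟩ := h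
  rcases Nat.eq_zero_or_pos n with hn | hn
  · refine ⟨0, 0, fun i j => le_rfl, ?_, ?_⟩
    · rw [specRad_zero_of_n_zero hn]
    · subst hn
      apply Subsingleton.elim
  have hQt : specRad Q < t := by
    rcases lt_or_eq_of_le htr with h1 | h1
    · exact h1
    · exfalso
      have h2 := specRad_mem_spectrum hn hQ
      rw [h1] at h2
      have h3 := mem_spec_iff_det.mp h2
      rw [← cm_shift, cm_det, Complex.ofReal_eq_zero] at h3
      rw [hNrep] at hNdet
      exact (isUnit_iff_ne_zero.mp hNdet) h3
  have ht0 : 0 < t := lt_of_le_of_lt (specRad_nonneg Q) hQt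
  refine ⟨t, Q + P, fun i j => add_nonneg (hQ i j) (hP i j), ?_, ?_⟩
  swap
  · rw [hZNP, hNrep, sub_sub]
  by_contra hcon
  push_neg at hcon
  set R := Q + P with hR
  set r := specRad R with hrdef
  have hRnn : ∀ i j, 0 ≤ R i j := fun i j => add_nonneg (hQ i j) (hP i j)
  have hrs : ((r:ℝ):ℂ) ∈ spectrum ℂ (cm R) := specRad_mem_spectrum hn hRnn
  have hNinv : ∀ i j, 0 ≤ N⁻¹ i j := by
    rw [hNrep]
    exact inv_entry_nonneg hQ hQt
  have hQr : specRad Q < r := lt_trans hQt hcon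
  have hr0 : 0 < r := lt_trans ht0 hcon
  set K := (r • (1 : Matrix (Fin n) (Fin n) ℝ) - Q)⁻¹ * P with hK
  have hKnn : ∀ i j, 0 ≤ K i j := mul_entry_nonneg (inv_entry_nonneg hQ hQr) hP
  have hKle : ∀ i j, K i j ≤ ((t/r) • (N⁻¹ * P)) i j := by
    intro i j
    have h1 := inv_entry_le hQ hQt (le_of_lt hcon)
    calc K i j ≤ (((t/r) • (t • (1 : Matrix (Fin n) (Fin n) ℝ) - Q)⁻¹) * P) i j := by
          refine mul_entry_le (inv_entry_nonneg hQ hQr) hP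
            (fun i j => by simpa [Matrix.smul_apply, smul_eq_mul] using h1 i j)
            (fun i j => le_rfl) i j
      _ = ((t/r) • (N⁻¹ * P)) i j := by
          rw [hNrep, Matrix.smul_mul]
  have hKrad : specRad K < 1 := by
    calc specRad K ≤ specRad ((t/r) • (N⁻¹ * P)) := specRad_mono hKnn hKle
      _ ≤ (t/r) * specRad (N⁻¹ * P) := specRad_smul_le _ (by positivity)
      _ ≤ (t/r) * 1 := mul_le_mul_of_nonneg_left hH (by positivity)
      _ < 1 := by rw [mul_one]; exact (div_lt_one hr0).mpr hcon
  have hIK : IsUnit (1 - K : Matrix (Fin n) (Fin n) ℝ).det := by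
    rw [isUnit_iff_ne_zero]
    intro hd
    have h1 : ((1:ℂ)) ∈ spectrum ℂ (cm K) := by
      rw [mem_spec_iff_det]
      have h2 : (1:ℂ) • (1 : Matrix (Fin n) (Fin n) ℂ) - cm K
          = cm ((1:ℝ) • (1 : Matrix (Fin n) (Fin n) ℝ) - K) := by
        rw [cm_shift]
        norm_num
      rw [h2, cm_det, one_smul, hd]
      norm_num
    have h3 := norm_le_specRadC h1
    rw [norm_one] at h3
    exact absurd (lt_of_le_of_lt h3 hKrad) (lt_irrefl 1)
  have hfact : r • (1 : Matrix (Fin n) (Fin n) ℝ) - R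
      = (r • (1 : Matrix (Fin n) (Fin n) ℝ) - Q) * (1 - K) := by
    rw [Matrix.mul_sub, Matrix.mul_one, hK, ← Matrix.mul_assoc,
      Matrix.mul_nonsing_inv _ (real_isUnit_det Q hQr), Matrix.one_mul, hR, sub_sub]
  have hdetR : (r • (1 : Matrix (Fin n) (Fin n) ℝ) - R).det ≠ 0 := by
    rw [hfact, Matrix.det_mul]
    exact mul_ne_zero (isUnit_iff_ne_zero.mp (real_isUnit_det Q hQr))
      (isUnit_iff_ne_zero.mp hIK)
  apply hdetR
  have h4 := mem_spec_iff_det.mp hrs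
  rwa [← cm_shift, cm_det, Complex.ofReal_eq_zero] at h4

end MMAux

/-- A Z-matrix `Z` is an M-matrix iff it can be written as `Z = N - P` with `N` a
nonsingular M-matrix, `P ≥ 0` entrywise and `ρ(N⁻¹ P) ≤ 1`. -/
theorem zmat_is_mmat_iff_splitting {n : ℕ} (Z : Matrix (Fin n) (Fin n) ℝ)
    (hZ : IsZMat Z) :
    IsMMat Z ↔
      ∃ N P : Matrix (Fin n) (Fin n) ℝ,
        IsNsMMat N ∧ (∀ i j, 0 ≤ P i j) ∧ Z = N - P ∧ specRad (N⁻¹ * P) ≤ 1 :=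
  ⟨MMAux.forward, MMAux.reverse⟩
end

section
/- Let M be an n×n M-matrix and Z an n×n Z-matrix with Z ≥ M entrywise. If either (i) M is nonsingular, or (ii) M is irreducible and Z ≠ M, then Z is a nonsingular M-matrix. -/
open Matrix

/-- A square matrix is irreducible if the directed graph on the indices, with an edge
from `i` to `j` whenever `A i j ≠ 0`, is strongly connected. -/
def IsIrred {n : ℕ} (A : Matrix (Fin n) (Fin n) ℝ) : Prop :=
  ∀ i j : Fin n, i ≠ j → Relation.TransGen (fun p q => A p q ≠ 0) i j

open Filter
open scoped ENNReal NNReal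

namespace MMatAux

variable {n : ℕ}

lemma spec_set_finite (A : Matrix (Fin n) (Fin n) ℝ) :
    {r : ℝ | ∃ μ ∈ spectrum ℂ (A.map (Complex.ofReal)), ‖μ‖ = r}.Finite :=
  (Matrix.finite_spectrum _).image norm

lemma norm_le_specRad {A : Matrix (Fin n) (Fin n) ℝ} {μ : ℂ}
    (h : μ ∈ spectrum ℂ (A.map (Complex.ofReal))) : ‖μ‖ ≤ specRad A :=
  le_csSup (spec_set_finite A).bddAbove ⟨μ, h, rfl⟩

lemma specRad_le {A : Matrix (Fin n) (Fin n) ℝ} {t : ℝ} (ht : 0 ≤ t)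
    (h : ∀ μ ∈ spectrum ℂ (A.map (Complex.ofReal)), ‖μ‖ ≤ t) : specRad A ≤ t :=
  Real.sSup_le (by rintro r ⟨μ, hμ, rfl⟩; exact h μ hμ) ht

lemma map_affine (A : Matrix (Fin n) (Fin n) ℝ) (x : ℝ) :
    (x • (1 : Matrix (Fin n) (Fin n) ℝ) - A).map Complex.ofReal
      = algebraMap ℂ (Matrix (Fin n) (Fin n) ℂ) (x : ℂ) - A.map Complex.ofReal := by
  ext i j
  simp [Matrix.map_apply, Matrix.one_apply, Matrix.algebraMap_matrix_apply, apply_ite]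

lemma mem_spec_iff_det {A : Matrix (Fin n) (Fin n) ℝ} {x : ℝ} :
    (x : ℂ) ∈ spectrum ℂ (A.map (Complex.ofReal))
      ↔ (x • (1 : Matrix (Fin n) (Fin n) ℝ) - A).det = 0 := by
  rw [spectrum.mem_iff, ← map_affine, Matrix.isUnit_iff_isUnit_det,
    show ((x • (1 : Matrix (Fin n) (Fin n) ℝ) - A).map Complex.ofReal).det
        = Complex.ofReal ((x • (1 : Matrix (Fin n) (Fin n) ℝ) - A).det) from
      (RingHom.map_det Complex.ofRealHom _).symm,
    isUnit_iff_ne_zero, not_ne_iff, Complex.ofReal_eq_zero]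

lemma isUnit_det_sub {A : Matrix (Fin n) (Fin n) ℝ} {r x : ℝ} (hr0 : 0 ≤ r)
    (hspec : ∀ μ ∈ spectrum ℂ (A.map (Complex.ofReal)), ‖μ‖ ≤ r) (hx : r < x) :
    IsUnit ((x • (1 : Matrix (Fin n) (Fin n) ℝ) - A).det) := by
  rw [isUnit_iff_ne_zero]
  intro h0
  have := hspec _ (mem_spec_iff_det.mpr h0)
  rw [Complex.norm_real, Real.norm_eq_abs, abs_of_nonneg (hr0.trans hx.le)] at this
  linarith

lemma exists_eigvec {B : Matrix (Fin n) (Fin n) ℂ} {μ : ℂ} (hμ : μ ∈ spectrum ℂ B) :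
    ∃ v, v ≠ 0 ∧ B.mulVec v = μ • v := by
  rw [spectrum.mem_iff, Algebra.algebraMap_eq_smul_one] at hμ
  rw [Matrix.isUnit_iff_isUnit_det, isUnit_iff_ne_zero, not_not,
    ← Matrix.exists_mulVec_eq_zero_iff] at hμ
  obtain ⟨v, hv, he⟩ := hμ
  refine ⟨v, hv, ?_⟩
  rwa [Matrix.sub_mulVec, Matrix.smul_mulVec, Matrix.one_mulVec, sub_eq_zero,
    eq_comm] at he

lemma mem_spectrum_of_eigvec {B : Matrix (Fin n) (Fin n) ℂ} {μ : ℂ} {v : Fin n → ℂ}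
    (hv : v ≠ 0) (he : B.mulVec v = μ • v) : μ ∈ spectrum ℂ B := by
  rw [spectrum.mem_iff, Algebra.algebraMap_eq_smul_one, Matrix.isUnit_iff_isUnit_det,
    isUnit_iff_ne_zero, not_not, ← Matrix.exists_mulVec_eq_zero_iff]
  exact ⟨v, hv, by rw [Matrix.sub_mulVec, Matrix.smul_mulVec, Matrix.one_mulVec, he,
    sub_self]⟩

/-- From a complex eigenvector of a nonnegative real matrix, build a nonnegative
real "sub-eigenvector" for the norm of the eigenvalue. -/
lemma abs_eigvec {Q : Matrix (Fin n) (Fin n) ℝ} (hQ : ∀ i j, 0 ≤ Q i j) {μ : ℂ}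
    {v : Fin n → ℂ} (hv : v ≠ 0) (he : (Q.map Complex.ofReal).mulVec v = μ • v) :
    ∃ w : Fin n → ℝ, (∀ i, 0 ≤ w i) ∧ w ≠ 0 ∧ ∀ i, ‖μ‖ * w i ≤ Q.mulVec w i := by
  refine ⟨fun i => ‖v i‖, fun i => norm_nonneg _, ?_, ?_⟩
  · intro h0
    apply hv
    funext i
    have := congrFun h0 i
    simpa using congrFun h0 i
  · intro i
    have h1 : ‖μ‖ * ‖v i‖ = ‖(μ • v) i‖ := by simp
    rw [h1, ← he]
    calc ‖(Q.map Complex.ofReal).mulVec v i‖ ≤ ∑ j, ‖(Q i j : ℂ) * v j‖ := by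
          simpa [Matrix.mulVec, dotProduct, Matrix.map_apply] using
            norm_sum_le Finset.univ (fun j => (Q i j : ℂ) * v j)
      _ = Q.mulVec (fun j => ‖v j‖) i := by
          simp [Matrix.mulVec, dotProduct, norm_mul, Complex.norm_real,
            abs_of_nonneg (hQ i _)]


variable {n : ℕ}

lemma mul_nonneg' {A B : Matrix (Fin n) (Fin n) ℝ} (hA : ∀ i j, 0 ≤ A i j)
    (hB : ∀ i j, 0 ≤ B i j) : ∀ i j, 0 ≤ (A * B) i j := fun i j => by
  rw [Matrix.mul_apply]
  exact Finset.sum_nonneg fun k _ => mul_nonneg (hA i k) (hB k j)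

lemma pow_nonneg' {A : Matrix (Fin n) (Fin n) ℝ} (hA : ∀ i j, 0 ≤ A i j) :
    ∀ (k : ℕ) i j, 0 ≤ (A ^ k) i j := by
  intro k
  induction k with
  | zero => intro i j; rcases eq_or_ne i j with rfl | h <;>
      simp [Matrix.one_apply, *]
  | succ k ih => rw [pow_succ]; exact mul_nonneg' ih hA

lemma mul_le_mul' {A A' B B' : Matrix (Fin n) (Fin n) ℝ} (hA : ∀ i j, 0 ≤ A i j)
    (hB : ∀ i j, 0 ≤ B i j) (hAA : ∀ i j, A i j ≤ A' i j) (hBB : ∀ i j, B i j ≤ B' i j) :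
    ∀ i j, (A * B) i j ≤ (A' * B') i j := fun i j => by
  rw [Matrix.mul_apply, Matrix.mul_apply]
  exact Finset.sum_le_sum fun k _ =>
    mul_le_mul (hAA i k) (hBB k j) (hB k j) ((hA i k).trans (hAA i k))

lemma mulVec_mono {A : Matrix (Fin n) (Fin n) ℝ} (hA : ∀ i j, 0 ≤ A i j)
    {u v : Fin n → ℝ} (huv : ∀ i, u i ≤ v i) : ∀ i, A.mulVec u i ≤ A.mulVec v i := fun i => by
  simp only [Matrix.mulVec, dotProduct]
  exact Finset.sum_le_sum fun k _ => mul_le_mul_of_nonneg_left (huv k) (hA i k)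

lemma entry_norm_le (A : Matrix (Fin n) (Fin n) ℝ) (i j : Fin n) :
    letI := Matrix.linftyOpNormedRing (n := Fin n) (α := ℝ); ‖A i j‖ ≤ ‖A‖ := by
  letI := Matrix.linftyOpNormedRing (n := Fin n) (α := ℝ)
  rw [← coe_nnnorm, ← coe_nnnorm, NNReal.coe_le_coe, Matrix.linfty_opNNNorm_def]
  calc ‖A i j‖₊ ≤ ∑ k, ‖A i k‖₊ :=
        Finset.single_le_sum (f := fun k => ‖A i k‖₊) (fun k _ => zero_le) (Finset.mem_univ j)
    _ ≤ _ := Finset.le_sup (f := fun i => ∑ k, ‖A i k‖₊) (Finset.mem_univ i)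



section Norms
attribute [local instance] Matrix.linftyOpNormedRing Matrix.linftyOpNormedAlgebra


variable {n : ℕ}

lemma nnnorm_cmap (A : Matrix (Fin n) (Fin n) ℝ) : ‖A.map Complex.ofReal‖₊ = ‖A‖₊ := by
  simp [Matrix.linfty_opNNNorm_def, Matrix.map_apply]

lemma cmap_pow (A : Matrix (Fin n) (Fin n) ℝ) (N : ℕ) :
    (A ^ N).map Complex.ofReal = (A.map Complex.ofReal) ^ N := by
  have := map_pow (Complex.ofRealHom.mapMatrix (m := Fin n)) A N
  have hcoe : ⇑Complex.ofRealHom = Complex.ofReal := rfl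
  rw [RingHom.mapMatrix_apply, RingHom.mapMatrix_apply, hcoe] at this
  exact this

/-- If all complex eigenvalues of a real matrix have norm `< 1`, then its powers
tend to zero in norm. -/
lemma pow_norm_tendsto_zero {a : Matrix (Fin n) (Fin n) ℝ} {ρ : ℝ} (h0 : 0 ≤ ρ) (h1 : ρ < 1)
    (hs : ∀ μ ∈ spectrum ℂ (a.map Complex.ofReal), ‖μ‖ ≤ ρ) :
    Tendsto (fun N : ℕ => ‖a ^ N‖) atTop (nhds 0) := by
  set b := a.map Complex.ofReal with hb
  have hnorm : ∀ N : ℕ, ‖a ^ N‖ = ‖b ^ N‖ := by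
    intro N
    rw [← cmap_pow, ← coe_nnnorm, ← coe_nnnorm, nnnorm_cmap]
  set c : ℝ := (ρ + 1) / 2 with hc
  have hρc : ρ < c := by rw [hc]; linarith
  have hc1 : c < 1 := by rw [hc]; linarith
  have hc0 : 0 ≤ c := le_trans h0 hρc.le
  have hsr : spectralRadius ℂ b ≤ (ρ.toNNReal : ℝ≥0∞) := by
    rw [spectralRadius]
    refine iSup₂_le fun μ hμ => ?_
    rw [ENNReal.coe_le_coe, ← norm_toNNReal]
    exact Real.toNNReal_mono (hs μ hμ)
  have hlt : spectralRadius ℂ b < (c.toNNReal : ℝ≥0∞) :=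
    lt_of_le_of_lt hsr (by
      rw [ENNReal.coe_lt_coe]
      exact (Real.toNNReal_lt_toNNReal_iff (lt_of_le_of_lt h0 hρc)).mpr hρc)
  have hev : ∀ᶠ N : ℕ in atTop, (‖b ^ N‖₊ : ℝ≥0∞) ^ (1 / (N : ℝ)) < (c.toNNReal : ℝ≥0∞) :=
    (spectrum.pow_nnnorm_pow_one_div_tendsto_nhds_spectralRadius b).eventually_lt_const hlt
  have hev2 : ∀ᶠ N : ℕ in atTop, ‖b ^ N‖ ≤ c ^ N := by
    filter_upwards [hev, Filter.eventually_ge_atTop 1] with N hN hN1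
    have hNne : (N : ℝ) ≠ 0 := Nat.cast_ne_zero.mpr (by omega)
    have hbig : (‖b ^ N‖₊ : ℝ≥0∞) ≤ (c.toNNReal : ℝ≥0∞) ^ (N : ℕ) := by
      calc (‖b ^ N‖₊ : ℝ≥0∞) = ((‖b ^ N‖₊ : ℝ≥0∞) ^ (1 / (N : ℝ))) ^ (N : ℝ) := by
            rw [← ENNReal.rpow_mul, one_div_mul_cancel hNne, ENNReal.rpow_one]
        _ ≤ ((c.toNNReal : ℝ≥0∞)) ^ (N : ℝ) :=
            ENNReal.rpow_le_rpow hN.le (Nat.cast_nonneg _)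
        _ = (c.toNNReal : ℝ≥0∞) ^ (N : ℕ) := by rw [ENNReal.rpow_natCast]
    rw [← ENNReal.coe_pow, ENNReal.coe_le_coe] at hbig
    calc ‖b ^ N‖ = ((‖b ^ N‖₊ : ℝ≥0) : ℝ) := rfl
      _ ≤ ((c.toNNReal ^ N : ℝ≥0) : ℝ) := NNReal.coe_le_coe.mpr hbig
      _ = c ^ N := by rw [NNReal.coe_pow, Real.coe_toNNReal _ hc0]
  have : Tendsto (fun N : ℕ => ‖b ^ N‖) atTop (nhds 0) :=
    squeeze_zero' (Filter.Eventually.of_forall fun N => norm_nonneg _) hev2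
      (tendsto_pow_atTop_nhds_zero_of_lt_one hc0 hc1)
  simpa only [hnorm] using this


end Norms



section NormsC
attribute [local instance] Matrix.linftyOpNormedRing Matrix.linftyOpNormedAlgebra

lemma spec_nonempty {n : ℕ} (hn : 0 < n) (A : Matrix (Fin n) (Fin n) ℝ) :
    (spectrum ℂ (A.map Complex.ofReal)).Nonempty := by
  haveI : NeZero n := ⟨hn.ne'⟩
  exact spectrum.nonempty _

end NormsC


section Norms2
attribute [local instance] Matrix.linftyOpNormedRing Matrix.linftyOpNormedAlgebra

lemma res_nonneg {P : Matrix (Fin n) (Fin n) ℝ} (hP : ∀ i j, 0 ≤ P i j) {r : ℝ} (hr0 : 0 ≤ r)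
    (hspec : ∀ μ ∈ spectrum ℂ (P.map Complex.ofReal), ‖μ‖ ≤ r) {x : ℝ} (hx : r < x) :
    ∀ i j, 0 ≤ ((x • (1 : Matrix (Fin n) (Fin n) ℝ) - P)⁻¹) i j := by
  have hx0 : 0 < x := lt_of_le_of_lt hr0 hx
  set a : Matrix (Fin n) (Fin n) ℝ := x⁻¹ • P with ha_def
  have ha : ∀ i j, 0 ≤ a i j := fun i j =>
    mul_nonneg (inv_nonneg.mpr hx0.le) (hP i j)
  have heq : x⁻¹ • (x • (1 : Matrix (Fin n) (Fin n) ℝ) - P) = 1 - a := by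
    rw [smul_sub, smul_smul, inv_mul_cancel₀ hx0.ne', one_smul]
  have hdetu : IsUnit ((x • (1 : Matrix (Fin n) (Fin n) ℝ) - P).det) :=
    isUnit_det_sub hr0 hspec hx
  have h1au : IsUnit ((1 - a).det) := by
    rw [← heq, Matrix.det_smul]
    exact isUnit_iff_ne_zero.mpr
      (mul_ne_zero (pow_ne_zero _ (inv_ne_zero hx0.ne')) hdetu.ne_zero)
  have haspec : ∀ μ ∈ spectrum ℂ (a.map Complex.ofReal), ‖μ‖ ≤ r / x := by
    intro μ hμ
    obtain ⟨v, hv, hev⟩ := exists_eigvec hμ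
    have hmap : a.map Complex.ofReal = (x⁻¹ : ℂ) • (P.map Complex.ofReal) := by
      ext i j
      simp only [Matrix.map_apply, Matrix.smul_apply, ha_def, smul_eq_mul]
      push_cast
      ring
    have hPv : (P.map Complex.ofReal).mulVec v = ((x : ℂ) * μ) • v := by
      rw [hmap, Matrix.smul_mulVec] at hev
      have := congrArg (fun u => (x : ℂ) • u) hev
      simp only [smul_smul] at this
      rw [mul_inv_cancel₀ (by exact_mod_cast hx0.ne' : (x:ℂ) ≠ 0), one_smul] at this
      exact this
    have h2 := hspec _ (mem_spectrum_of_eigvec hv hPv)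
    rw [norm_mul, Complex.norm_real, Real.norm_eq_abs, abs_of_pos hx0] at h2
    rw [le_div_iff₀ hx0, mul_comm]
    exact h2
  have hpow := pow_norm_tendsto_zero (div_nonneg hr0 hx0.le) ((div_lt_one hx0).mpr hx) haspec
  set B : Matrix (Fin n) (Fin n) ℝ := (1 - a)⁻¹ with hB_def
  have hB1 : B * (1 - a) = 1 := Matrix.nonsing_inv_mul _ h1au
  have h1B : (1 - a) * B = 1 := Matrix.mul_nonsing_inv _ h1au
  set S : ℕ → Matrix (Fin n) (Fin n) ℝ := fun N => ∑ k ∈ Finset.range N, a ^ k with hS_def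
  have hSnn : ∀ N i j, 0 ≤ S N i j := by
    intro N i j
    show 0 ≤ (∑ k ∈ Finset.range N, a ^ k) i j
    rw [Matrix.sum_apply]
    exact Finset.sum_nonneg fun k _ => pow_nonneg' ha k i j
  have hSB : ∀ N, S N - B = -(a ^ N * B) := by
    intro N
    have h3 : S N * (1 - a) = 1 - a ^ N := by
      have hg := geom_sum_mul a N
      rw [show (1 - a : Matrix (Fin n) (Fin n) ℝ) = -(a - 1) from (neg_sub _ _).symm,
        mul_neg, hg, neg_sub]
    have h4 : S N = (1 - a ^ N) * B := by
      calc S N = S N * ((1 - a) * B) := by rw [h1B, mul_one]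
        _ = (S N * (1 - a)) * B := by rw [mul_assoc]
        _ = (1 - a ^ N) * B := by rw [h3]
    rw [h4, sub_mul, one_mul, sub_sub_cancel_left]
  have hent : ∀ i j, Tendsto (fun N => S N i j) atTop (nhds (B i j)) := by
    intro i j
    rw [tendsto_iff_norm_sub_tendsto_zero]
    have hb : ∀ N : ℕ, ‖S N i j - B i j‖ ≤ ‖a ^ N‖ * ‖B‖ := by
      intro N
      have h5 : S N i j - B i j = (S N - B) i j := by simp [Matrix.sub_apply]
      rw [h5, hSB]
      calc ‖(-(a ^ N * B)) i j‖ = ‖(a ^ N * B) i j‖ := by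
            simp [Matrix.neg_apply]
        _ ≤ ‖a ^ N * B‖ := entry_norm_le _ i j
        _ ≤ ‖a ^ N‖ * ‖B‖ := norm_mul_le _ _
    have hlim : Tendsto (fun N : ℕ => ‖a ^ N‖ * ‖B‖) atTop (nhds 0) := by
      simpa using hpow.mul_const ‖B‖
    exact squeeze_zero (fun N => norm_nonneg _) hb hlim
  have hBnn : ∀ i j, 0 ≤ B i j := fun i j =>
    ge_of_tendsto (hent i j) (Filter.Eventually.of_forall fun N => hSnn N i j)
  have hinv : (x • (1 : Matrix (Fin n) (Fin n) ℝ) - P)⁻¹ = x⁻¹ • B := by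
    apply Matrix.inv_eq_left_inv
    calc (x⁻¹ • B) * (x • (1 : Matrix (Fin n) (Fin n) ℝ) - P)
        = B * (x⁻¹ • (x • (1 : Matrix (Fin n) (Fin n) ℝ) - P)) := by
          rw [smul_mul_assoc, mul_smul_comm]
      _ = B * (1 - a) := by rw [heq]
      _ = 1 := hB1
  intro i j
  rw [hinv, Matrix.smul_apply, smul_eq_mul]
  exact mul_nonneg (inv_nonneg.mpr hx0.le) (hBnn i j)

end Norms2

/-- Key lemma: a nonnegative matrix `P` with all eigenvalue norms `≤ r`, such that
`r•1 - P` is nonsingular, admits no nonzero nonnegative `w` with `P w ≥ r w`. -/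
lemma lemA {P : Matrix (Fin n) (Fin n) ℝ} (hP : ∀ i j, 0 ≤ P i j) {r : ℝ} (hr0 : 0 ≤ r)
    (hspec : ∀ μ ∈ spectrum ℂ (P.map Complex.ofReal), ‖μ‖ ≤ r)
    (hdet : IsUnit ((r • (1 : Matrix (Fin n) (Fin n) ℝ) - P).det))
    {w : Fin n → ℝ} (hw0 : ∀ i, 0 ≤ w i) (hw : w ≠ 0)
    (hPw : ∀ i, r * w i ≤ P.mulVec w i) : False := by
  have key : ∀ x : ℝ, r < x →
      ∀ i, w i ≤ (x - r) * (((x • (1 : Matrix (Fin n) (Fin n) ℝ) - P)⁻¹).mulVec w) i := by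
    intro x hx i
    have hdx : IsUnit ((x • (1 : Matrix (Fin n) (Fin n) ℝ) - P).det) :=
      isUnit_det_sub hr0 hspec hx
    have hres := res_nonneg hP hr0 hspec hx
    have h1 : ∀ k, ((x • (1 : Matrix (Fin n) (Fin n) ℝ) - P).mulVec w) k
        ≤ ((x - r) • w) k := by
      intro k
      rw [Matrix.sub_mulVec, Matrix.smul_mulVec, Matrix.one_mulVec]
      simp only [Pi.sub_apply, Pi.smul_apply, smul_eq_mul]
      rw [sub_mul]
      linarith [hPw k]
    have h2 := mulVec_mono hres h1 i
    rw [Matrix.mulVec_mulVec, Matrix.nonsing_inv_mul _ hdx, Matrix.one_mulVec,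
      Matrix.mulVec_smul] at h2
    simpa using h2
  have hcont : ∀ i, Tendsto
      (fun m : ℕ => ((r + 1/((m:ℝ)+1)) - r) *
        ((((r + 1/((m:ℝ)+1)) • (1 : Matrix (Fin n) (Fin n) ℝ) - P)⁻¹).mulVec w) i)
      atTop (nhds 0) := by
    intro i
    have hxm : Tendsto (fun m : ℕ => r + 1/((m:ℝ)+1)) atTop (nhds r) := by
      have := tendsto_one_div_add_atTop_nhds_zero_nat.const_add r
      simpa using this
    have hgc : Continuous (fun x : ℝ => x • (1 : Matrix (Fin n) (Fin n) ℝ) - P) :=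
      (continuous_id.smul continuous_const).sub continuous_const
    have hic : ContinuousAt (fun A : Matrix (Fin n) (Fin n) ℝ => A⁻¹)
        (r • (1 : Matrix (Fin n) (Fin n) ℝ) - P) := by
      apply continuousAt_matrix_inv
      rw [Ring.inverse_eq_inv']
      exact continuousAt_inv₀ hdet.ne_zero
    have hev : Continuous (fun A : Matrix (Fin n) (Fin n) ℝ => (A.mulVec w) i) :=
      (continuous_apply i).comp (continuous_id.matrix_mulVec continuous_const)
    have hca1 : ContinuousAt (fun x : ℝ => x • (1 : Matrix (Fin n) (Fin n) ℝ) - P) r :=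
      hgc.continuousAt
    have hca2 : ContinuousAt (fun x : ℝ => (x • (1 : Matrix (Fin n) (Fin n) ℝ) - P)⁻¹) r :=
      ContinuousAt.comp (g := fun A : Matrix (Fin n) (Fin n) ℝ => A⁻¹)
        (f := fun x : ℝ => x • (1 : Matrix (Fin n) (Fin n) ℝ) - P) (x := r) hic hca1
    have hca3 : ContinuousAt
        (fun x : ℝ => (((x • (1 : Matrix (Fin n) (Fin n) ℝ) - P)⁻¹).mulVec w) i) r :=
      ContinuousAt.comp (g := fun A : Matrix (Fin n) (Fin n) ℝ => (A.mulVec w) i)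
        (f := fun x : ℝ => (x • (1 : Matrix (Fin n) (Fin n) ℝ) - P)⁻¹) (x := r)
        hev.continuousAt hca2
    have hIc : Tendsto
        (fun m : ℕ => ((((r + 1/((m:ℝ)+1)) • (1 : Matrix (Fin n) (Fin n) ℝ) - P)⁻¹).mulVec w) i)
        atTop (nhds ((((r • (1 : Matrix (Fin n) (Fin n) ℝ) - P)⁻¹).mulVec w) i)) :=
      hca3.tendsto.comp hxm
    have := ((hxm.sub_const r).mul hIc)
    simpa using this
  have hle : ∀ i, w i ≤ 0 := by
    intro i
    refine ge_of_tendsto (hcont i) (Filter.Eventually.of_forall fun m => ?_)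
    have hpos : (0:ℝ) < 1/((m:ℝ)+1) := by positivity
    exact key _ (by linarith) i
  apply hw
  funext i
  exact le_antisymm (hle i) (hw0 i)

lemma one_nonneg : ∀ i j, 0 ≤ (1 : Matrix (Fin n) (Fin n) ℝ) i j := fun i j => by
  rcases eq_or_ne i j with rfl | h <;> simp [Matrix.one_apply, *]

lemma pow_le_pow_entrywise {A A' : Matrix (Fin n) (Fin n) ℝ} (hA : ∀ i j, 0 ≤ A i j)
    (hAA : ∀ i j, A i j ≤ A' i j) (k : ℕ) : ∀ i j, (A ^ k) i j ≤ (A' ^ k) i j := by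
  induction k with
  | zero => intro i j; simp
  | succ k ih =>
    intro i j
    rw [pow_succ, pow_succ]
    exact mul_le_mul' (pow_nonneg' hA k) hA ih hAA i j

lemma one_add_nonneg {R : Matrix (Fin n) (Fin n) ℝ} (hR : ∀ i j, 0 ≤ R i j) :
    ∀ i j, 0 ≤ (1 + R) i j := fun i j => by
  rw [Matrix.add_apply]
  exact add_nonneg (one_nonneg i j) (hR i j)

lemma pow_factor_le {R : Matrix (Fin n) (Fin n) ℝ} (hR : ∀ i j, 0 ≤ R i j) {k m : ℕ}
    (hkm : k ≤ m) : ∀ i j, (R ^ k) i j ≤ ((1 + R) ^ m) i j := by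
  have hR1 : ∀ i j, R i j ≤ (1 + R) i j := fun i j => by
    rw [Matrix.add_apply]; linarith [one_nonneg (n := n) i j]
  have h11 : ∀ i j, (1 : Matrix (Fin n) (Fin n) ℝ) i j ≤ (1 + R) i j := fun i j => by
    rw [Matrix.add_apply]; linarith [hR i j]
  intro i j
  have step1 : ∀ i j, (R ^ k) i j ≤ ((1 + R) ^ k) i j := pow_le_pow_entrywise hR hR1 k
  have step2 : ∀ i j, ((1:Matrix (Fin n) (Fin n) ℝ)) i j ≤ ((1 + R) ^ (m - k)) i j := by
    intro i j
    have := pow_le_pow_entrywise (A := (1 : Matrix (Fin n) (Fin n) ℝ)) one_nonneg h11 (m-k) i j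
    rwa [one_pow] at this
  calc (R ^ k) i j = ((R ^ k * 1 : Matrix (Fin n) (Fin n) ℝ)) i j := by rw [mul_one]
    _ ≤ ((1 + R) ^ k * (1 + R) ^ (m - k)) i j :=
        mul_le_mul' (pow_nonneg' hR k) one_nonneg step1 step2 i j
    _ = ((1 + R) ^ m) i j := by rw [← pow_add, Nat.add_sub_cancel' hkm]

lemma transGen_pow_pos {R M : Matrix (Fin n) (Fin n) ℝ} (hR : ∀ i j, 0 ≤ R i j)
    (hedge : ∀ p q, p ≠ q → M p q ≠ 0 → 0 < R p q) {i j : Fin n}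
    (h : Relation.TransGen (fun p q => M p q ≠ 0) i j) :
    i = j ∨ ∃ k, 1 ≤ k ∧ 0 < (R ^ k) i j := by
  induction h with
  | @single b hb =>
    by_cases hib : i = b
    · exact Or.inl hib
    · exact Or.inr ⟨1, le_rfl, by rw [pow_one]; exact hedge i b hib hb⟩
  | @tail b c hab hbc ih =>
    by_cases hbc' : b = c
    · subst hbc'; exact ih
    · have hRbc : 0 < R b c := hedge _ _ hbc' hbc
      rcases ih with rfl | ⟨k, hk1, hkpos⟩
      · exact Or.inr ⟨1, le_rfl, by rw [pow_one]; exact hRbc⟩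
      · refine Or.inr ⟨k + 1, by omega, ?_⟩
        have hpos : 0 < (R ^ k) i b * R b c := mul_pos hkpos hRbc
        calc (0:ℝ) < (R ^ k) i b * R b c := hpos
          _ ≤ ∑ q, (R ^ k) i q * R q c :=
              Finset.single_le_sum (f := fun q => (R ^ k) i q * R q c)
                (fun q _ => mul_nonneg (pow_nonneg' hR k i q) (hR q c)) (Finset.mem_univ b)
          _ = (R ^ (k + 1)) i c := by rw [pow_succ, Matrix.mul_apply]

lemma mulVec_mono_left {A B : Matrix (Fin n) (Fin n) ℝ} (hAB : ∀ i j, A i j ≤ B i j)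
    {w : Fin n → ℝ} (hw : ∀ i, 0 ≤ w i) : ∀ i, A.mulVec w i ≤ B.mulVec w i := fun i => by
  simp only [Matrix.mulVec, dotProduct]
  exact Finset.sum_le_sum fun k _ => mul_le_mul_of_nonneg_right (hAB i k) (hw k)

lemma smul_one_add_mulVec (c : ℝ) (P : Matrix (Fin n) (Fin n) ℝ) (w : Fin n → ℝ) (i : Fin n) :
    (c • (1 : Matrix (Fin n) (Fin n) ℝ) + P).mulVec w i = c * w i + P.mulVec w i := by
  rw [Matrix.add_mulVec, Matrix.smul_mulVec, Matrix.one_mulVec]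
  simp



end MMatAux

open MMatAux

/-- If `M` is an M-matrix and `Z` is a Z-matrix with `Z ≥ M` entrywise, and moreover
either `M` is nonsingular, or `M` is irreducible and `Z ≠ M`, then `Z` is a
nonsingular M-matrix. -/

theorem zmat_above_mmat_nonsingular {n : ℕ} (M Z : Matrix (Fin n) (Fin n) ℝ)
    (hM : IsMMat M) (hZ : IsZMat Z) (hge : ∀ i j, M i j ≤ Z i j)
    (hextra : IsUnit M.det ∨ (IsIrred M ∧ Z ≠ M)) :
    IsNsMMat Z := by
  classical
  rcases Nat.eq_zero_or_pos n with rfl | hn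
  · -- trivial case n = 0
    haveI : Subsingleton (Matrix (Fin 0) (Fin 0) ℂ) :=
      ⟨fun A B => by ext i j; exact i.elim0⟩
    constructor
    · refine ⟨0, 0, fun i j => le_refl 0, ?_, ?_⟩
      · have hempty : {r : ℝ | ∃ μ ∈ spectrum ℂ
            ((0 : Matrix (Fin 0) (Fin 0) ℝ).map (Complex.ofReal)), ‖μ‖ = r} = ∅ := by
          ext r
          simp only [Set.mem_setOf_eq, Set.mem_empty_iff_false, iff_false, not_exists]
          rintro μ ⟨hμ, -⟩
          rw [spectrum.mem_iff] at hμ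
          exact hμ (isUnit_of_subsingleton _)
        rw [specRad, hempty, Real.sSup_empty]
      · ext i j; exact i.elim0
    · rw [Matrix.det_isEmpty]; exact isUnit_one
  -- main case
  haveI : Nonempty (Fin n) := ⟨⟨0, hn⟩⟩
  obtain ⟨s, P, hP, hρ, hMeq⟩ := hM
  have hPspec : ∀ μ ∈ spectrum ℂ (P.map (Complex.ofReal)), ‖μ‖ ≤ s := fun μ hμ =>
    le_trans (norm_le_specRad hμ) hρ
  have hs0 : 0 ≤ s := by
    obtain ⟨μ0, hμ0⟩ := spec_nonempty hn P
    exact le_trans (norm_nonneg μ0) (hPspec μ0 hμ0)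
  have hMdiag : ∀ i, M i i = s - P i i := by
    intro i; rw [hMeq]; simp [Matrix.sub_apply, Matrix.smul_apply, Matrix.one_apply]
  have hMoff : ∀ i j, i ≠ j → M i j = -P i j := by
    intro i j hij; rw [hMeq]; simp [Matrix.sub_apply, Matrix.smul_apply, Matrix.one_apply_ne hij]
  set c : ℝ := Finset.univ.sup' Finset.univ_nonempty (fun i => Z i i - M i i) with hc_def
  have hcN : ∀ i, Z i i - M i i ≤ c := fun i => by
    rw [hc_def]
    exact Finset.le_sup' (f := fun i => Z i i - M i i) (Finset.mem_univ i)
  have hc0 : 0 ≤ c := by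
    obtain ⟨i0⟩ := (inferInstance : Nonempty (Fin n))
    have h1 := hge i0 i0
    have h2 : Z i0 i0 - M i0 i0 ≤ c := hcN i0
    have h3 : (0:ℝ) ≤ Z i0 i0 - M i0 i0 := by linarith
    linarith
  set t : ℝ := s + c with ht_def
  have ht0 : 0 ≤ t := by linarith
  set Q : Matrix (Fin n) (Fin n) ℝ := t • (1 : Matrix (Fin n) (Fin n) ℝ) - Z with hQdef
  have hZQ : Z = t • (1 : Matrix (Fin n) (Fin n) ℝ) - Q := by rw [hQdef, sub_sub_cancel]
  have hQ0 : ∀ i j, 0 ≤ Q i j := by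
    intro i j
    rcases eq_or_ne i j with rfl | hij
    · have h1 := hcN i
      have h2 := hMdiag i
      have h3 := hP i i
      simp only [hQdef, Matrix.sub_apply, Matrix.smul_apply, Matrix.one_apply_eq, smul_eq_mul,
        mul_one]
      linarith
    · have h1 := hZ i j hij
      simp only [hQdef, Matrix.sub_apply, Matrix.smul_apply, Matrix.one_apply_ne hij,
        smul_eq_mul, mul_zero]
      linarith
  set R : Matrix (Fin n) (Fin n) ℝ := c • (1 : Matrix (Fin n) (Fin n) ℝ) + P with hRdef
  have hR0 : ∀ i j, 0 ≤ R i j := by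
    intro i j
    rcases eq_or_ne i j with rfl | hij
    · simp only [hRdef, Matrix.add_apply, Matrix.smul_apply, Matrix.one_apply_eq, smul_eq_mul,
        mul_one]
      linarith [hP i i]
    · simp only [hRdef, Matrix.add_apply, Matrix.smul_apply, Matrix.one_apply_ne hij,
        smul_eq_mul, mul_zero]
      linarith [hP i j]
  have hRQN : ∀ i j, R i j - Q i j = Z i j - M i j := by
    intro i j
    rcases eq_or_ne i j with rfl | hij
    · have h2 := hMdiag i
      simp only [hRdef, hQdef, Matrix.add_apply, Matrix.sub_apply, Matrix.smul_apply,
        Matrix.one_apply_eq, smul_eq_mul, mul_one]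
      linarith
    · have h2 := hMoff i j hij
      simp only [hRdef, hQdef, Matrix.add_apply, Matrix.sub_apply, Matrix.smul_apply,
        Matrix.one_apply_ne hij, smul_eq_mul, mul_zero]
      linarith
  have hQR : ∀ i j, Q i j ≤ R i j := by
    intro i j
    have h1 := hge i j
    have h2 := hRQN i j
    linarith
  -- eigenvalue bound for Q
  have hQspec : ∀ μ ∈ spectrum ℂ (Q.map (Complex.ofReal)), ‖μ‖ ≤ t := by
    intro μ hμ
    by_contra hgt
    push_neg at hgt
    obtain ⟨v, hv, hev⟩ := exists_eigvec hμ
    obtain ⟨w, hw0, hwne, hQw⟩ := abs_eigvec hQ0 hv hev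
    have hPw : ∀ i, (‖μ‖ - c) * w i ≤ P.mulVec w i := by
      intro i
      have h1 := hQw i
      have h2 : Q.mulVec w i ≤ R.mulVec w i := mulVec_mono_left hQR hw0 i
      have h3 : R.mulVec w i = c * w i + P.mulVec w i := by
        rw [hRdef]; exact smul_one_add_mulVec c P w i
      have h4 := hw0 i
      nlinarith
    exact lemA hP (by linarith : (0:ℝ) ≤ ‖μ‖ - c)
      (fun μ' hμ' => by have := hPspec μ' hμ'; linarith)
      (isUnit_det_sub hs0 hPspec (by linarith : s < ‖μ‖ - c)) hw0 hwne hPw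
  have hMMat : IsMMat Z := ⟨t, Q, hQ0, specRad_le ht0 hQspec, hZQ⟩
  refine ⟨hMMat, ?_⟩
  by_contra hdetZ
  have hdet0 : (t • (1 : Matrix (Fin n) (Fin n) ℝ) - Q).det = 0 := by
    rw [← hZQ]
    rwa [isUnit_iff_ne_zero, not_not] at hdetZ
  have hmem : ((t:ℝ) : ℂ) ∈ spectrum ℂ (Q.map (Complex.ofReal)) := mem_spec_iff_det.mpr hdet0
  obtain ⟨v, hv, hev⟩ := exists_eigvec hmem
  obtain ⟨w, hw0, hwne, hQw'⟩ := abs_eigvec hQ0 hv hev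
  have hQw : ∀ i, t * w i ≤ Q.mulVec w i := by
    intro i
    have := hQw' i
    rwa [Complex.norm_real, Real.norm_eq_abs, abs_of_nonneg ht0] at this
  have hRw : ∀ i, t * w i ≤ R.mulVec w i := fun i =>
    le_trans (hQw i) (mulVec_mono_left hQR hw0 i)
  have hRsplit : ∀ (x : Fin n → ℝ) i, R.mulVec x i = c * x i + P.mulVec x i := by
    intro x i; rw [hRdef]; exact smul_one_add_mulVec c P x i
  have hPws : ∀ i, s * w i ≤ P.mulVec w i := by
    intro i
    have h1 := hRw i
    have h2 := hRsplit w i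
    have h3 : t * w i = s * w i + c * w i := by rw [ht_def]; ring
    linarith
  rcases hextra with hMdet | ⟨hirr, hneq⟩
  · -- M nonsingular
    have hdetM : IsUnit ((s • (1 : Matrix (Fin n) (Fin n) ℝ) - P).det) := by rwa [← hMeq]
    exact lemA hP hs0 hPspec hdetM hw0 hwne hPws
  · -- M irreducible, Z ≠ M
    have hedge : ∀ p q, p ≠ q → M p q ≠ 0 → 0 < R p q := by
      intro p q hpq hM0
      have h1 := hMoff p q hpq
      have h2 : R p q = P p q := by
        simp only [hRdef, Matrix.add_apply, Matrix.smul_apply, Matrix.one_apply_ne hpq,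
          smul_eq_mul, mul_zero, zero_add]
      rw [h2]
      refine lt_of_le_of_ne (hP p q) fun h => hM0 ?_
      rw [h1, ← h, neg_zero]
    set u : Fin n → ℝ := fun i => R.mulVec w i - t * w i with hu_def
    have hu0 : ∀ i, 0 ≤ u i := fun i => by
      simp only [hu_def]
      linarith [hRw i]
    by_cases hu : ∀ i, u i = 0
    · -- R w = t w : equality case ⇒ Z = M, contradiction
      have hRwEq : ∀ i, R.mulVec w i = t * w i := fun i => by
        have := hu i
        simp only [hu_def] at this
        linarith
      have hclosed : ∀ j k, w j = 0 → M j k ≠ 0 → w k = 0 := by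
        intro j k hwj hMjk
        rcases eq_or_ne j k with rfl | hjk
        · exact hwj
        · have hsum : ∑ q, R j q * w q = 0 := by
            have h1 := hRwEq j
            rw [hwj, mul_zero] at h1
            simpa [Matrix.mulVec, dotProduct] using h1
          have hterm : R j k * w k = 0 :=
            (Finset.sum_eq_zero_iff_of_nonneg
              (fun q _ => mul_nonneg (hR0 j q) (hw0 q))).mp hsum k (Finset.mem_univ k)
          rcases mul_eq_zero.mp hterm with h | h
          · exact absurd h (hedge j k hjk hMjk).ne'
          · exact h
      obtain ⟨i0, hi0⟩ : ∃ i, w i ≠ 0 := by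
        by_contra h
        push_neg at h
        exact hwne (funext h)
      have hwpos : ∀ i, 0 < w i := by
        intro j
        rcases lt_or_eq_of_le (hw0 j) with h | h
        · exact h
        exfalso
        have hwj : w j = 0 := h.symm
        have hprop : ∀ k, Relation.TransGen (fun p q => M p q ≠ 0) j k → w k = 0 := by
          intro k hk
          induction hk with
          | @single b hb => exact hclosed j b hwj hb
          | @tail b c' hab hbc ih => exact hclosed b c' ih hbc
        rcases eq_or_ne j i0 with rfl | hji
        · exact hi0 hwj
        · exact hi0 (hprop i0 (hirr j i0 hji))
      apply hneq
      have : ∀ i j, Z i j = M i j := by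
        intro i j
        have hQwUp : Q.mulVec w i ≤ t * w i :=
          le_trans (mulVec_mono_left hQR hw0 i) (le_of_eq (hRwEq i))
        have hQwEq : Q.mulVec w i = t * w i := le_antisymm hQwUp (hQw i)
        have hsum0 : ∑ q, (R i q - Q i q) * w q = 0 := by
          have h1 : ∑ q, R i q * w q = R.mulVec w i := by
            simp [Matrix.mulVec, dotProduct]
          have h2 : ∑ q, Q i q * w q = Q.mulVec w i := by
            simp [Matrix.mulVec, dotProduct]
          have h3 : ∑ q, (R i q - Q i q) * w q
              = (∑ q, R i q * w q) - ∑ q, Q i q * w q := by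
            rw [← Finset.sum_sub_distrib]
            congr 1
            funext q
            ring
          rw [h3, h1, h2, hRwEq i, hQwEq, sub_self]
        have hterm : (R i j - Q i j) * w j = 0 :=
          (Finset.sum_eq_zero_iff_of_nonneg
            (fun q _ => mul_nonneg (by linarith [hQR i q]) (hw0 q))).mp hsum0 j
            (Finset.mem_univ j)
        have h4 : R i j - Q i j = 0 := by
          rcases mul_eq_zero.mp hterm with h | h
          · exact h
          · exact absurd h (hwpos j).ne'
        have h5 := hRQN i j
        linarith
      ext i j
      exact this i j
    · -- strict supersolution case
      push_neg at hu
      obtain ⟨j0, hj0⟩ := hu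
      have hj0pos : 0 < u j0 := lt_of_le_of_ne (hu0 j0) (Ne.symm hj0)
      set K : Fin n × Fin n → ℕ := fun p =>
        if h : p.1 ≠ p.2 then
          ((transGen_pow_pos hR0 hedge (hirr p.1 p.2 h)).resolve_left h).choose
        else 0 with hK_def
      set m : ℕ := Finset.univ.sup K with hm_def
      have hKspec : ∀ (i j : Fin n), (h : i ≠ j) →
          1 ≤ K (i, j) ∧ 0 < (R ^ K (i, j)) i j := by
        intro i j hij
        have hd : K (i, j)
            = ((transGen_pow_pos hR0 hedge (hirr i j hij)).resolve_left hij).choose := by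
          simp only [hK_def]
          rw [dif_pos (show (i, j).1 ≠ (i, j).2 from hij)]
        rw [hd]
        exact ((transGen_pow_pos hR0 hedge (hirr i j hij)).resolve_left hij).choose_spec
      set B : Matrix (Fin n) (Fin n) ℝ := (1 + R) ^ m with hB_def
      have hB0 : ∀ i j, 0 ≤ B i j := pow_nonneg' (one_add_nonneg hR0) m
      have hBpos : ∀ i j, 0 < B i j := by
        intro i j
        rcases eq_or_ne i j with rfl | hij
        · have h1 := pow_factor_le hR0 (Nat.zero_le m) i i
          rw [pow_zero, Matrix.one_apply_eq] at h1
          linarith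
        · obtain ⟨hk1, hkpos⟩ := hKspec i j hij
          have hle := pow_factor_le hR0
            (Finset.le_sup (f := K) (Finset.mem_univ (i, j))) i j
          exact lt_of_lt_of_le hkpos hle
      set x : Fin n → ℝ := B.mulVec w with hx_def
      obtain ⟨i1, hi1⟩ : ∃ i, w i ≠ 0 := by
        by_contra h
        push_neg at h
        exact hwne (funext h)
      have hxpos : ∀ i, 0 < x i := by
        intro i
        have h1 : 0 < B i i1 * w i1 :=
          mul_pos (hBpos i i1) (lt_of_le_of_ne (hw0 i1) (Ne.symm hi1))
        calc (0:ℝ) < B i i1 * w i1 := h1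
          _ ≤ ∑ q, B i q * w q :=
              Finset.single_le_sum (f := fun q => B i q * w q)
                (fun q _ => mul_nonneg (hB0 i q) (hw0 q)) (Finset.mem_univ i1)
          _ = x i := by simp [hx_def, Matrix.mulVec, dotProduct]
      have hBupos : ∀ i, 0 < B.mulVec u i := by
        intro i
        have h1 : 0 < B i j0 * u j0 := mul_pos (hBpos i j0) hj0pos
        calc (0:ℝ) < B i j0 * u j0 := h1
          _ ≤ ∑ q, B i q * u q :=
              Finset.single_le_sum (f := fun q => B i q * u q)
                (fun q _ => mul_nonneg (hB0 i q) (hu0 q)) (Finset.mem_univ j0)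
          _ = B.mulVec u i := by simp [Matrix.mulVec, dotProduct]
      have hcomm : B * R = R * B :=
        (((Commute.one_left R).add_left (Commute.refl R)).pow_left m).eq
      have hRx : ∀ i, R.mulVec x i = t * x i + B.mulVec u i := by
        intro i
        have h1 : R.mulVec x = B.mulVec (R.mulVec w) := by
          rw [hx_def, Matrix.mulVec_mulVec, Matrix.mulVec_mulVec, ← hcomm]
        have h2 : (fun q => R.mulVec w q) = fun q => t * w q + u q := by
          funext q
          simp only [hu_def]
          ring
        rw [h1]
        have h3 : B.mulVec (R.mulVec w) i = B.mulVec (fun q => t * w q + u q) i := by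
          rw [show R.mulVec w = fun q => t * w q + u q from h2]
        rw [h3]
        have h4 : B.mulVec (fun q => t * w q + u q) i
            = t * (B.mulVec w) i + B.mulVec u i := by
          simp only [Matrix.mulVec, dotProduct, mul_add, Finset.sum_add_distrib,
            Finset.mul_sum]
          congr 1
          apply Finset.sum_congr rfl
          intro q _
          ring
        rw [h4]
      set ε : ℝ := Finset.univ.inf' Finset.univ_nonempty (fun i => B.mulVec u i / x i)
        with hε_def
      have hεpos : 0 < ε := by
        rw [hε_def, Finset.lt_inf'_iff]
        exact fun i _ => div_pos (hBupos i) (hxpos i)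
      have hεle : ∀ i, ε * x i ≤ B.mulVec u i := by
        intro i
        have h1 : ε ≤ B.mulVec u i / x i :=
          Finset.inf'_le _ (Finset.mem_univ i)
        exact (le_div_iff₀ (hxpos i)).mp h1
      have hPx : ∀ i, (s + ε) * x i ≤ P.mulVec x i := by
        intro i
        have h1 := hRx i
        have h2 := hRsplit x i
        have h3 := hεle i
        have h4 : t * x i = s * x i + c * x i := by rw [ht_def]; ring
        nlinarith
      have hxne : x ≠ 0 := by
        intro h0
        have := hxpos ⟨0, hn⟩
        rw [h0] at this
        simp at this
      exact lemA hP (by linarith : (0:ℝ) ≤ s + ε)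
        (fun μ' hμ' => by have := hPspec μ' hμ'; linarith)
        (isUnit_det_sub hs0 hPspec (by linarith : s < s + ε))
        (fun i => (hxpos i).le) hxne hPx
end

section
/- Let l : ℝⁿ → ℝᵐ be a weakly positive linear map. Then for every z ∈ ℝᵐ with z ≥ 0, the set {x ∈ ℝⁿ : x ≥ 0 and l(x) ≤ z} is bounded. -/
/-- A linear map `l : ℝⁿ → ℝᵐ` is weakly positive if `l x ≥ 0` and `l x ≠ 0`
whenever `x ≥ 0` and `x ≠ 0` (all inequalities entrywise). -/
def WeaklyPos {n m : ℕ} (l : (Fin n → ℝ) →ₗ[ℝ] (Fin m → ℝ)) : Prop :=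
  ∀ x : Fin n → ℝ, 0 ≤ x → x ≠ 0 → 0 ≤ l x ∧ l x ≠ 0

/-- If `l` is a weakly positive linear map, then for every `z ≥ 0` the set
`{x : x ≥ 0 and l x ≤ z}` is bounded. -/
theorem weaklyPos_sublevel_bounded {n m : ℕ}
    (l : (Fin n → ℝ) →ₗ[ℝ] (Fin m → ℝ)) (hl : WeaklyPos l)
    (z : Fin m → ℝ) (hz : 0 ≤ z) :
    Bornology.IsBounded {x : Fin n → ℝ | 0 ≤ x ∧ l x ≤ z} := by
  rcases Nat.eq_zero_or_pos n with hn | hn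
  · subst hn
    refine (Set.finite_singleton (0 : Fin 0 → ℝ)).isBounded.subset ?_
    intro x _
    simp [Subsingleton.elim x 0]
  -- the simplex
  set K : Set (Fin n → ℝ) := {x | 0 ≤ x ∧ ∑ j, x j = 1} with hK
  have hKne : K.Nonempty := by
    refine ⟨fun _ => (n : ℝ)⁻¹, ?_, ?_⟩
    · intro i; positivity
    · simp [Finset.sum_const]
      field_simp
  -- φ
  set φ : (Fin n → ℝ) → ℝ := fun x => ∑ i, l x i with hφ
  have hlc : Continuous l := l.continuous_of_finiteDimensional
  have hφc : Continuous φ := by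
    apply continuous_finset_sum
    intro i _
    exact (continuous_apply i).comp hlc
  have hKcl : IsClosed K := by
    have h1 : IsClosed {x : Fin n → ℝ | 0 ≤ x} := by
      have : {x : Fin n → ℝ | 0 ≤ x} = ⋂ i, {x | 0 ≤ x i} := by
        ext x; simp [Pi.le_def, Set.mem_iInter]
      rw [this]
      exact isClosed_iInter fun i => isClosed_le continuous_const (continuous_apply i)
    have h2 : IsClosed {x : Fin n → ℝ | ∑ j, x j = 1} :=
      isClosed_eq (continuous_finset_sum _ fun j _ => continuous_apply j) continuous_const
    exact h1.inter h2
  have hKbd : Bornology.IsBounded K := by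
    apply Bornology.IsBounded.subset (Metric.isBounded_closedBall (x := 0) (r := 1))
    rintro x ⟨hx0, hxs⟩
    simp only [Metric.mem_closedBall, dist_zero_right]
    rw [pi_norm_le_iff_of_nonneg zero_le_one]
    intro i
    rw [Real.norm_eq_abs, abs_of_nonneg (hx0 i)]
    calc x i ≤ ∑ j, x j := Finset.single_le_sum (fun j _ => hx0 j) (Finset.mem_univ i)
    _ = 1 := hxs
  have hKcpt : IsCompact K := Metric.isCompact_of_isClosed_isBounded hKcl hKbd
  obtain ⟨x₀, hx₀K, hmin⟩ := hKcpt.exists_isMinOn hKne hφc.continuousOn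
  set c := φ x₀ with hc
  have hcpos : 0 < c := by
    obtain ⟨hx₀0, hx₀s⟩ := hx₀K
    have hx₀ne : x₀ ≠ 0 := by
      intro h; rw [h] at hx₀s; simp at hx₀s
    obtain ⟨hlpos, hlne⟩ := hl x₀ hx₀0 hx₀ne
    have : ∃ i, 0 < l x₀ i := by
      by_contra h
      push_neg at h
      apply hlne
      funext i
      exact le_antisymm (h i) (hlpos i)
    obtain ⟨i, hi⟩ := this
    exact Finset.sum_pos' (fun j _ => hlpos j) ⟨i, Finset.mem_univ i, hi⟩
  set Z := ∑ i, z i with hZ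
  have hZnn : 0 ≤ Z := Finset.sum_nonneg fun i _ => hz i
  apply Bornology.IsBounded.subset (Metric.isBounded_closedBall (x := 0) (r := Z / c))
  rintro x ⟨hx0, hxz⟩
  simp only [Metric.mem_closedBall, dist_zero_right]
  have hRnn : 0 ≤ Z / c := div_nonneg hZnn hcpos.le
  rcases eq_or_ne x 0 with rfl | hxne
  · simpa using hRnn
  -- s > 0
  have hspos : 0 < ∑ j, x j := by
    have : ∃ j, 0 < x j := by
      by_contra h
      push_neg at h
      exact hxne (funext fun j => le_antisymm (h j) (hx0 j))
    obtain ⟨j, hj⟩ := this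
    exact Finset.sum_pos' (fun k _ => hx0 k) ⟨j, Finset.mem_univ j, hj⟩
  set s := ∑ j, x j with hs
  have hyK : s⁻¹ • x ∈ K := by
    constructor
    · intro i
      simp only [Pi.smul_apply, smul_eq_mul]
      exact mul_nonneg (inv_nonneg.mpr hspos.le) (hx0 i)
    · simp only [Pi.smul_apply, smul_eq_mul, ← Finset.mul_sum]
      field_simp
      exact hs.symm
  have hφy : c ≤ φ (s⁻¹ • x) := hmin hyK
  have hφsmul : φ (s⁻¹ • x) = s⁻¹ * φ x := by
    simp only [hφ, map_smul, Pi.smul_apply, smul_eq_mul, ← Finset.mul_sum]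
  have hφxZ : φ x ≤ Z := Finset.sum_le_sum fun i _ => hxz i
  have hsle : s ≤ Z / c := by
    rw [le_div_iff₀ hcpos]
    calc s * c ≤ s * (s⁻¹ * φ x) := by
          apply mul_le_mul_of_nonneg_left _ hspos.le
          rw [← hφsmul]; exact hφy
      _ = φ x := by field_simp
      _ ≤ Z := hφxZ
  rw [pi_norm_le_iff_of_nonneg hRnn]
  intro i
  rw [Real.norm_eq_abs, abs_of_nonneg (hx0 i)]
  calc x i ≤ s := Finset.single_le_sum (fun j _ => hx0 j) (Finset.mem_univ i)
    _ ≤ Z / c := hsle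
end

section
/- The QVE Mx = a + b(x,x) has at least one nonnegative solution if and only if Condition A1 holds. -/
open Matrix Filter Topology
open scoped ENNReal NNReal

lemma specRad_nonneg {n : ℕ} (A : Matrix (Fin n) (Fin n) ℝ) : 0 ≤ specRad A :=
  Real.sSup_nonneg (by rintro x ⟨μ, _, rfl⟩; exact norm_nonneg μ)

lemma norm_le_specRad {n : ℕ} (A : Matrix (Fin n) (Fin n) ℝ) {μ : ℂ}
    (hμ : μ ∈ spectrum ℂ (A.map Complex.ofReal)) : ‖μ‖ ≤ specRad A := by
  apply le_csSup
  · have : {r : ℝ | ∃ μ ∈ spectrum ℂ (A.map (Complex.ofReal)), ‖μ‖ = r} =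
        (fun μ : ℂ => ‖μ‖) '' (spectrum ℂ (A.map Complex.ofReal)) := by
      ext r; simp [Set.mem_image]
    rw [this]
    exact ((Matrix.finite_spectrum _).image _).bddAbove
  · exact ⟨μ, hμ, rfl⟩

lemma pow_entries_nonneg {n : ℕ} {Q : Matrix (Fin n) (Fin n) ℝ} (hQ : ∀ i j, 0 ≤ Q i j)
    (m : ℕ) : ∀ i j, 0 ≤ (Q ^ m) i j := by
  induction m with
  | zero => intro i j; by_cases h : i = j <;> simp [pow_zero, Matrix.one_apply, h]
  | succ m ih =>
    intro i j
    rw [pow_succ, Matrix.mul_apply]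
    exact Finset.sum_nonneg fun k _ => mul_nonneg (ih i k) (hQ k j)

section Norms

attribute [local instance] Matrix.linftyOpNormedRing Matrix.linftyOpNormedAlgebra

lemma entry_norm_le {n : ℕ} (X : Matrix (Fin n) (Fin n) ℂ) (i j : Fin n) :
    ‖X i j‖ ≤ ‖X‖ := by
  rw [Matrix.linfty_opNorm_def]
  have h1 : ‖X i j‖₊ ≤ ∑ k, ‖X i k‖₊ :=
    Finset.single_le_sum (f := fun k => ‖X i k‖₊) (fun _ _ => zero_le) (Finset.mem_univ j)
  have h2 : (∑ k, ‖X i k‖₊) ≤ Finset.univ.sup fun i => ∑ k, ‖X i k‖₊ :=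
    Finset.le_sup (f := fun i => ∑ k, ‖X i k‖₊) (Finset.mem_univ i)
  exact_mod_cast h1.trans h2

/-- The key lemma over `ℂ`: if `specRad P < t` then `t•1 - P` is invertible and its
(real) inverse has nonnegative entries. -/
lemma smul_one_sub_inv_nonneg {n : ℕ} (P : Matrix (Fin n) (Fin n) ℝ)
    (hP : ∀ i j, 0 ≤ P i j) {t : ℝ} (ht : specRad P < t) :
    IsUnit (t • (1 : Matrix (Fin n) (Fin n) ℝ) - P).det ∧
      ∀ i j, 0 ≤ (t • (1 : Matrix (Fin n) (Fin n) ℝ) - P)⁻¹ i j := by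
  rcases Nat.eq_zero_or_pos n with hn | hn
  · subst hn
    constructor
    · simp [Matrix.det_fin_zero]
    · intro i; exact absurd i.2 (by simp)
  have : NeZero n := ⟨hn.ne'⟩
  haveI : CompleteSpace (Matrix (Fin n) (Fin n) ℂ) := FiniteDimensional.complete ℂ _
  have htpos : 0 < t := (specRad_nonneg P).trans_lt ht
  set P' : Matrix (Fin n) (Fin n) ℂ := P.map Complex.ofReal with hP'
  set Q : Matrix (Fin n) (Fin n) ℝ := t⁻¹ • P with hQdef
  have hQ : ∀ i j, 0 ≤ Q i j := fun i j =>
    mul_nonneg (inv_nonneg.mpr htpos.le) (hP i j)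
  set A : Matrix (Fin n) (Fin n) ℂ := Q.map Complex.ofReal with hAdef
  have hAP : A = ((t : ℂ))⁻¹ • P' := by
    ext i j
    simp [hAdef, hQdef, hP', Matrix.map_apply, Matrix.smul_apply, smul_eq_mul]
  -- spectral radius of A is < 1
  have hsr : spectralRadius ℂ A < 1 := by
    have hle : spectralRadius ℂ A ≤ ENNReal.ofReal (specRad P / t) := by
      apply iSup₂_le
      intro μ hμ
      have htne : ((t : ℂ)) ≠ 0 := by exact_mod_cast htpos.ne'
      set u : ℂˣ := Units.mk0 ((t : ℂ))⁻¹ (inv_ne_zero htne) with hu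
      have : μ ∈ spectrum ℂ (u • P') := by
        rw [hAP] at hμ; exact hμ
      rw [spectrum.unit_smul_eq_smul] at this
      obtain ⟨ν, hν, rfl⟩ := this
      have hnν : ‖ν‖ ≤ specRad P := norm_le_specRad P hν
      have hval : ‖(u : ℂ) • ν‖ = t⁻¹ * ‖ν‖ := by
        simp [hu, smul_eq_mul, norm_mul, map_inv₀, abs_of_pos htpos, Complex.norm_real]
      rw [← enorm_eq_nnnorm, ← ofReal_norm]
      beta_reduce
      rw [hval]
      apply ENNReal.ofReal_le_ofReal
      rw [div_eq_inv_mul]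
      exact mul_le_mul_of_nonneg_left hnν (inv_nonneg.mpr htpos.le)
    refine hle.trans_lt ?_
    rw [ENNReal.ofReal_lt_one]
    exact div_lt_one htpos |>.mpr ht
  -- Gelfand: some power has norm < 1
  obtain ⟨k, hk0, hk⟩ : ∃ k, 0 < k ∧ ‖A ^ k‖ < 1 := by
    have hg := spectrum.pow_norm_pow_one_div_tendsto_nhds_spectralRadius A
    have hev := (hg.eventually_lt_const hsr).and (eventually_gt_atTop 0)
    obtain ⟨k, hlt, hk0⟩ := hev.exists
    refine ⟨k, hk0, ?_⟩
    rw [ENNReal.ofReal_lt_one] at hlt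
    by_contra hc
    push_neg at hc
    have : (1 : ℝ) ≤ ‖A ^ k‖ ^ (1 / (k : ℝ)) :=
      Real.one_le_rpow hc (by positivity)
    linarith
  -- invertibility of 1 - A
  have h1A : IsUnit (1 - A) := by
    have h1 : (1 : ℂ) ∉ spectrum ℂ A := by
      intro h
      have hle : (1 : ℝ≥0∞) ≤ spectralRadius ℂ A := by
        have := le_iSup₂ (f := fun (μ : ℂ) (_ : μ ∈ spectrum ℂ A) => (‖μ‖₊ : ℝ≥0∞)) 1 h
        simpa [spectralRadius] using this
      exact absurd (hle.trans_lt hsr) (by simp)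
    have h2 := spectrum.notMem_iff.mp h1
    simpa using h2
  have hdet : IsUnit (1 - A).det := (Matrix.isUnit_iff_isUnit_det _).mp h1A
  set T : Matrix (Fin n) (Fin n) ℂ := (1 - A)⁻¹ with hTdef
  have hTl : T * (1 - A) = 1 := Matrix.nonsing_inv_mul _ hdet
  have hgeo : ∀ N, (1 - A) * (∑ m ∈ Finset.range N, A ^ m) = 1 - A ^ N := by
    intro N
    have h := mul_geom_sum A N
    have h2 : (1 - A) * (∑ m ∈ Finset.range N, A ^ m) =
        -((A - 1) * ∑ m ∈ Finset.range N, A ^ m) := by noncomm_ring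
    rw [h2, h, neg_sub]
  have hSN : ∀ N, (∑ m ∈ Finset.range N, A ^ m) = T - T * A ^ N := by
    intro N
    have h3 := congrArg (T * ·) (hgeo N)
    beta_reduce at h3
    rw [← mul_assoc, hTl, one_mul] at h3
    rw [h3, mul_sub, mul_one]
  set c := ‖A ^ k‖ with hcdef
  have hc0 : 0 ≤ c := norm_nonneg _
  set B := max 1 ‖A‖ ^ k with hBdef
  have hbound : ∀ N, ‖A ^ N‖ ≤ c ^ (N / k) * B := by
    intro N
    have hNd : A ^ N = (A ^ k) ^ (N / k) * A ^ (N % k) := by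
      rw [← pow_mul, ← pow_add, Nat.div_add_mod]
    calc ‖A ^ N‖ ≤ ‖(A ^ k) ^ (N / k)‖ * ‖A ^ (N % k)‖ := by
          rw [hNd]; exact norm_mul_le _ _
    _ ≤ c ^ (N / k) * B := by
        apply mul_le_mul (norm_pow_le _ _) ?_ (norm_nonneg _) (by positivity)
        calc ‖A ^ (N % k)‖ ≤ ‖A‖ ^ (N % k) := norm_pow_le _ _
        _ ≤ (max 1 ‖A‖) ^ (N % k) := pow_le_pow_left₀ (norm_nonneg _) (le_max_right _ _) _
        _ ≤ B := pow_le_pow_right₀ (le_max_left _ _) (Nat.mod_lt N hk0).le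
  have hdiv : Tendsto (fun N : ℕ => N / k) atTop atTop := by
    apply tendsto_atTop_atTop.mpr
    intro b
    exact ⟨b * k, fun a ha => (Nat.le_div_iff_mul_le hk0).mpr ha⟩
  have hgeoto : Tendsto (fun N : ℕ => c ^ (N / k) * B) atTop (𝓝 0) := by
    have h1 : Tendsto (fun m : ℕ => c ^ m) atTop (𝓝 0) :=
      tendsto_pow_atTop_nhds_zero_of_lt_one hc0 hk
    simpa using (h1.comp hdiv).mul_const B
  have hA0 : Tendsto (fun N : ℕ => A ^ N) atTop (𝓝 0) := squeeze_zero_norm hbound hgeoto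
  have hTS : Tendsto (fun N : ℕ => ∑ m ∈ Finset.range N, A ^ m) atTop (𝓝 T) := by
    have h2 : (fun N : ℕ => ∑ m ∈ Finset.range N, A ^ m) = fun N => T - T * A ^ N :=
      funext hSN
    rw [h2]
    simpa using tendsto_const_nhds.sub (tendsto_const_nhds.mul hA0)
  have hpow : ∀ m : ℕ, A ^ m = (Q ^ m).map Complex.ofReal := by
    intro m
    have h4 : A = Complex.ofRealHom.mapMatrix Q := rfl
    rw [h4, ← map_pow]
    rfl
  have hentry : ∀ i j, 0 ≤ (T i j).re := by
    intro i j
    have h3 : Tendsto (fun N : ℕ => (∑ m ∈ Finset.range N, A ^ m) i j) atTop (𝓝 (T i j)) := by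
      have hnorm : Tendsto (fun N : ℕ => ‖(∑ m ∈ Finset.range N, A ^ m) - T‖) atTop (𝓝 0) :=
        tendsto_iff_norm_sub_tendsto_zero.mp hTS
      have hz : Tendsto (fun N : ℕ => (∑ m ∈ Finset.range N, A ^ m) i j - T i j) atTop (𝓝 0) := by
        apply squeeze_zero_norm ?_ hnorm
        intro N
        have h5 : (∑ m ∈ Finset.range N, A ^ m) i j - T i j =
            ((∑ m ∈ Finset.range N, A ^ m) - T) i j := by simp [Matrix.sub_apply]
        rw [h5]; exact entry_norm_le _ i j
      have h6 := hz.add (tendsto_const_nhds (x := T i j) (f := atTop))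
      simpa using h6
    have hre : Tendsto (fun N : ℕ => ((∑ m ∈ Finset.range N, A ^ m) i j).re) atTop
        (𝓝 ((T i j).re)) := (Complex.continuous_re.tendsto _).comp h3
    apply ge_of_tendsto' hre
    intro N
    have h7 : (∑ m ∈ Finset.range N, A ^ m) i j = ∑ m ∈ Finset.range N, (A ^ m) i j := by
      simp [Matrix.sum_apply]
    rw [h7, Complex.re_sum]
    apply Finset.sum_nonneg
    intro m _
    rw [hpow m]
    simpa [Matrix.map_apply] using pow_entries_nonneg hQ m i j
  -- back to the real matrix
  set Nr : Matrix (Fin n) (Fin n) ℝ := t • (1 : Matrix (Fin n) (Fin n) ℝ) - P with hNrdef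
  have htne : ((t : ℂ)) ≠ 0 := by exact_mod_cast htpos.ne'
  have hNc : Nr.map Complex.ofReal = (t : ℂ) • (1 - A) := by
    ext i j
    by_cases h : i = j <;>
      simp [hNrdef, hAP, hP', Matrix.map_apply, Matrix.sub_apply, Matrix.smul_apply,
        Matrix.one_apply, h, smul_eq_mul, mul_sub, mul_inv_cancel₀ htne,
        mul_inv_cancel_left₀ htne]
  have hdetc : IsUnit ((t : ℂ) • (1 - A)).det := by
    rw [Matrix.det_smul]
    exact (IsUnit.pow _ (Ne.isUnit htne)).mul hdet
  have hdetNr : IsUnit Nr.det := by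
    have hmd : Complex.ofReal Nr.det = (Nr.map Complex.ofReal).det := by
      have h12 : Nr.map Complex.ofReal = Complex.ofRealHom.mapMatrix Nr := rfl
      rw [h12, ← RingHom.map_det]; rfl
    have h8 : (Complex.ofReal Nr.det) = ((t : ℂ) • (1 - A)).det := by
      rw [hmd, hNc]
    have hne : Nr.det ≠ 0 := by
      intro h0
      rw [h0] at h8
      simp only [Complex.ofReal_zero] at h8
      exact hdetc.ne_zero h8.symm
    exact hne.isUnit
  refine ⟨hdetNr, ?_⟩
  intro i j
  have hinvc : ((t : ℂ) • (1 - A))⁻¹ = (t : ℂ)⁻¹ • T := by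
    apply Matrix.inv_eq_left_inv
    rw [Matrix.smul_mul, Matrix.mul_smul, smul_smul, inv_mul_cancel₀ htne, one_smul, hTl]
  have hmapinv : Nr⁻¹.map Complex.ofReal = ((t : ℂ) • (1 - A))⁻¹ := by
    apply (Matrix.inv_eq_left_inv ?_).symm
    have hmm : Nr⁻¹.map Complex.ofReal * Nr.map Complex.ofReal
        = (Nr⁻¹ * Nr).map Complex.ofReal := by
      ext i' j'
      simp [Matrix.mul_apply, Matrix.map_apply]
    rw [← hNc, hmm, Matrix.nonsing_inv_mul _ hdetNr]
    ext i' j'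
    by_cases h : i' = j' <;> simp [Matrix.map_apply, Matrix.one_apply, h]
  have h9 : (Complex.ofReal (Nr⁻¹ i j)) = (t : ℂ)⁻¹ * T i j := by
    have h10 := congrFun (congrFun (hmapinv.trans hinvc) i) j
    simpa [Matrix.map_apply, Matrix.smul_apply, smul_eq_mul] using h10
  have hre9 := congrArg Complex.re h9
  rw [Complex.ofReal_re] at hre9
  rw [hre9]
  have h11 : ((t : ℂ)⁻¹ * T i j).re = t⁻¹ * (T i j).re := by
    rw [show ((t : ℂ))⁻¹ = ((t⁻¹ : ℝ) : ℂ) by push_cast; ring, Complex.re_ofReal_mul]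
  rw [h11]
  exact mul_nonneg (inv_nonneg.mpr htpos.le) (hentry i j)

end Norms

/-- The inverse of a nonsingular M-matrix is entrywise nonnegative. -/
lemma inv_nonneg_of_isNsMMat {n : ℕ} {M : Matrix (Fin n) (Fin n) ℝ} (hM : IsNsMMat M) :
    ∀ i j, 0 ≤ M⁻¹ i j := by
  obtain ⟨⟨s, P, hP, hsp, rfl⟩, hdet⟩ := hM
  intro i j
  set f : ℝ → ℝ := fun t => (t • (1 : Matrix (Fin n) (Fin n) ℝ) - P)⁻¹ i j with hf
  have hc1 : Continuous fun t : ℝ => t • (1 : Matrix (Fin n) (Fin n) ℝ) - P :=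
    (continuous_id.smul continuous_const).sub continuous_const
  have hcont : ContinuousAt f s := by
    have hdet' : Continuous fun t : ℝ => (t • (1 : Matrix (Fin n) (Fin n) ℝ) - P).det :=
      hc1.matrix_det
    have hadj : Continuous fun t : ℝ => (t • (1 : Matrix (Fin n) (Fin n) ℝ) - P).adjugate :=
      hc1.matrix_adjugate
    have hfeq : f = fun t => ((t • (1 : Matrix (Fin n) (Fin n) ℝ) - P).det)⁻¹ *
        (t • (1 : Matrix (Fin n) (Fin n) ℝ) - P).adjugate i j := by
      funext t
      rw [hf]
      simp [Matrix.inv_def, Ring.inverse_eq_inv', Matrix.smul_apply, smul_eq_mul]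
    rw [hfeq]
    have hdne : ((s • (1 : Matrix (Fin n) (Fin n) ℝ) - P).det) ≠ 0 := hdet.ne_zero
    exact (hdet'.continuousAt.inv₀ hdne).mul
      (((continuous_apply j).comp ((continuous_apply i).comp hadj)).continuousAt)
  have hlim : Tendsto f (𝓝[>] s) (𝓝 (f s)) := hcont.tendsto.mono_left nhdsWithin_le_nhds
  have hev : ∀ᶠ t in 𝓝[>] s, 0 ≤ f t := by
    filter_upwards [self_mem_nhdsWithin] with t ht
    exact (smul_one_sub_inv_nonneg P hP (lt_of_le_of_lt hsp ht)).2 i j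
  exact ge_of_tendsto hlim hev

lemma mulVec_entrywise_nonneg {n : ℕ} {R : Matrix (Fin n) (Fin n) ℝ}
    (hR : ∀ i j, 0 ≤ R i j) {v : Fin n → ℝ} (hv : 0 ≤ v) : 0 ≤ R *ᵥ v := by
  rw [Pi.le_def] at hv ⊢
  intro i
  simpa [Matrix.mulVec, dotProduct] using
    Finset.sum_nonneg fun j _ => mul_nonneg (hR i j) (hv j)

lemma mulVec_entrywise_mono {n : ℕ} {R : Matrix (Fin n) (Fin n) ℝ}
    (hR : ∀ i j, 0 ≤ R i j) {u v : Fin n → ℝ} (huv : u ≤ v) : R *ᵥ u ≤ R *ᵥ v := by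
  rw [Pi.le_def] at huv ⊢
  intro i
  simp only [Matrix.mulVec, dotProduct]
  exact Finset.sum_le_sum fun j _ => mul_le_mul_of_nonneg_left (huv j) (hR i j)

lemma bil_mono {n : ℕ} (b : (Fin n → ℝ) →ₗ[ℝ] (Fin n → ℝ) →ₗ[ℝ] (Fin n → ℝ))
    (hb : ∀ x y : Fin n → ℝ, 0 ≤ x → 0 ≤ y → 0 ≤ b x y)
    {x y : Fin n → ℝ} (hx : 0 ≤ x) (hxy : x ≤ y) : b x x ≤ b y y := by
  have hy : 0 ≤ y := hx.trans hxy
  have hd : 0 ≤ y - x := sub_nonneg.mpr hxy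
  have h1 : b y y - b x x = b (y - x) y + b x (y - x) := by
    rw [map_sub, LinearMap.sub_apply, map_sub]
    abel
  have h2 : 0 ≤ b y y - b x x := by
    rw [h1]
    exact add_nonneg (hb _ _ hd hy) (hb _ _ hx hd)
  exact sub_nonneg.mp h2

lemma weaklyPos_bound {n m : ℕ} {l : (Fin n → ℝ) →ₗ[ℝ] (Fin m → ℝ)} (hl : WeaklyPos l) :
    ∃ c > 0, ∀ v : Fin n → ℝ, 0 ≤ v → c * (∑ i, v i) ≤ ∑ j, l v j := by
  rcases Nat.eq_zero_or_pos n with hn | hn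
  · refine ⟨1, one_pos, fun v hv => ?_⟩
    have hv0 : v = 0 := funext fun i => absurd (i.2.trans_le hn.le) (by simp)
    subst hv0
    simp
  · set K : Set (Fin n → ℝ) := {v | 0 ≤ v} ∩ {v | ∑ i, v i = 1} with hK
    have hA : IsClosed {v : Fin n → ℝ | 0 ≤ v} := by
      have h1 : {v : Fin n → ℝ | 0 ≤ v} = ⋂ i, {v : Fin n → ℝ | 0 ≤ v i} := by
        ext v; simp [Pi.le_def, Set.mem_iInter, Set.mem_setOf_eq]
      rw [h1]
      exact isClosed_iInter fun i => isClosed_le continuous_const (continuous_apply i)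
    have hB : IsClosed {v : Fin n → ℝ | ∑ i, v i = 1} :=
      isClosed_eq (continuous_finset_sum _ fun i _ => continuous_apply i) continuous_const
    have hKclosed : IsClosed K := hA.inter hB
    have hKsub : K ⊆ Set.Icc (0 : Fin n → ℝ) 1 := by
      rintro v ⟨hv0, hv1⟩
      refine ⟨hv0, ?_⟩
      rw [Pi.le_def]
      intro i
      have h2 : v i ≤ ∑ j, v j :=
        Finset.single_le_sum (fun j _ => (Pi.le_def.mp hv0) j) (Finset.mem_univ i)
      have hv1' : (∑ j, v j) = 1 := hv1
      show v i ≤ (1 : ℝ)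
      rw [← hv1']
      exact h2
    have hKcompact : IsCompact K := isCompact_Icc.of_isClosed_subset hKclosed hKsub
    have hnne : (n : ℝ) ≠ 0 := Nat.cast_ne_zero.mpr hn.ne'
    have hv₀K : (fun _ : Fin n => (n : ℝ)⁻¹) ∈ K := by
      constructor
      · intro i; positivity
      · simp [Finset.sum_const, Finset.card_fin, mul_inv_cancel₀ hnne]
    have hlc : Continuous l := l.continuous_of_finiteDimensional
    have hg : Continuous fun v : Fin n → ℝ => ∑ j, l v j :=
      continuous_finset_sum _ fun j _ => (continuous_apply j).comp hlc
    obtain ⟨w, hwK, hminOn⟩ := hKcompact.exists_isMinOn ⟨_, hv₀K⟩ hg.continuousOn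
    have hmin := isMinOn_iff.mp hminOn
    have hw0 : 0 ≤ w := hwK.1
    have hwne : w ≠ 0 := by
      intro h0
      have := hwK.2
      rw [h0] at this
      simp at this
    obtain ⟨hlw0, hlwne⟩ := hl w hw0 hwne
    have hcpos : 0 < ∑ j, l w j := by
      rcases (Finset.sum_nonneg fun j _ => (Pi.le_def.mp hlw0) j).lt_or_eq with h | h
      · exact h
      · exfalso
        apply hlwne
        funext j
        exact (Finset.sum_eq_zero_iff_of_nonneg fun j _ => (Pi.le_def.mp hlw0) j).mp h.symm j
          (Finset.mem_univ j)
    refine ⟨∑ j, l w j, hcpos, ?_⟩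
    intro v hv
    by_cases hs : (∑ i, v i) = 0
    · have hv0 : v = 0 := funext fun i =>
        (Finset.sum_eq_zero_iff_of_nonneg fun i _ => (Pi.le_def.mp hv) i).mp hs i
          (Finset.mem_univ i)
      subst hv0
      simp [hs]
    · have hSpos : 0 < ∑ i, v i :=
        lt_of_le_of_ne (Finset.sum_nonneg fun i _ => (Pi.le_def.mp hv) i) (Ne.symm hs)
      set S := ∑ i, v i with hSdef
      have hw'K : S⁻¹ • v ∈ K := by
        constructor
        · intro i
          exact mul_nonneg (inv_nonneg.mpr hSpos.le) ((Pi.le_def.mp hv) i)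
        · show (∑ i, (S⁻¹ • v) i) = 1
          simp only [Pi.smul_apply, smul_eq_mul, ← Finset.mul_sum]
          exact inv_mul_cancel₀ hSpos.ne'
      have hmin' := hmin _ hw'K
      have heq : (∑ j, l (S⁻¹ • v) j) = S⁻¹ * ∑ j, l v j := by
        rw [_root_.map_smul]
        simp only [Pi.smul_apply, smul_eq_mul, ← Finset.mul_sum]
      rw [heq] at hmin'
      have h3 := mul_le_mul_of_nonneg_left hmin' hSpos.le
      rw [← mul_assoc, mul_inv_cancel₀ hSpos.ne', one_mul] at h3
      calc (∑ j, l w j) * S = S * (∑ j, l w j) := mul_comm _ _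
      _ ≤ ∑ j, l v j := h3

lemma bil_self_continuous {n : ℕ} (b : (Fin n → ℝ) →ₗ[ℝ] (Fin n → ℝ) →ₗ[ℝ] (Fin n → ℝ)) :
    Continuous fun x : Fin n → ℝ => b x x := by
  have hexp : ∀ u v : Fin n → ℝ,
      b u v = ∑ p, ∑ q, (u p * v q) • b (Pi.single p 1) (Pi.single q 1) := by
    intro u v
    have hbasis : ∀ w : Fin n → ℝ, w = ∑ p, w p • (Pi.single p 1 : Fin n → ℝ) := by
      intro w
      funext q
      rw [Finset.sum_apply]
      simp [Pi.single_apply, mul_comm]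
    conv_lhs => rw [hbasis u, hbasis v]
    simp only [map_sum, LinearMap.sum_apply, _root_.map_smul, LinearMap.smul_apply,
      Finset.smul_sum, smul_smul]
    rw [Finset.sum_comm]
    refine Finset.sum_congr rfl fun p _ => Finset.sum_congr rfl fun q _ => ?_
    rw [mul_comm]
  have h4 : (fun x : Fin n → ℝ => b x x) =
      fun x => ∑ p, ∑ q, (x p * x q) • b (Pi.single p 1) (Pi.single q 1) :=
    funext fun x => hexp x x
  rw [h4]
  apply continuous_finset_sum
  intro p _
  apply continuous_finset_sum
  intro q _
  exact ((continuous_apply p).mul (continuous_apply q)).smul continuous_const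

/-- The QVE `M x = a + b(x,x)` (with `M` a nonsingular M-matrix, `a ≥ 0`, and `b`
bilinear and nonnegative) has a nonnegative solution if and only if Condition A1 holds. -/
theorem qve_has_solution_iff_A1 {n : ℕ} (M : Matrix (Fin n) (Fin n) ℝ)
    (hM : IsNsMMat M) (a : Fin n → ℝ) (ha : 0 ≤ a)
    (b : (Fin n → ℝ) →ₗ[ℝ] (Fin n → ℝ) →ₗ[ℝ] (Fin n → ℝ))
    (hb : ∀ x y : Fin n → ℝ, 0 ≤ x → 0 ≤ y → 0 ≤ b x y) :
    (∃ x : Fin n → ℝ, 0 ≤ x ∧ M *ᵥ x = a + b x x) ↔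
      (∃ (m : ℕ) (l : (Fin n → ℝ) →ₗ[ℝ] (Fin m → ℝ)) (z : Fin m → ℝ),
        WeaklyPos l ∧ 0 ≤ z ∧
          ∀ x : Fin n → ℝ, 0 ≤ x → l x ≤ z → l (M⁻¹ *ᵥ (a + b x x)) ≤ z) := by
  have hMinv := inv_nonneg_of_isNsMMat hM
  have hdet := hM.2
  constructor
  · rintro ⟨x₀, hx0, hsol⟩
    refine ⟨n, LinearMap.id, x₀, fun x hx hxne => ⟨hx, hxne⟩, hx0, ?_⟩
    intro x hx hle
    simp only [LinearMap.id_coe, id_eq] at hle ⊢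
    have hx₀eq : M⁻¹ *ᵥ (a + b x₀ x₀) = x₀ := by
      rw [← hsol, Matrix.mulVec_mulVec, Matrix.nonsing_inv_mul _ hdet, Matrix.one_mulVec]
    calc M⁻¹ *ᵥ (a + b x x) ≤ M⁻¹ *ᵥ (a + b x₀ x₀) :=
          mulVec_entrywise_mono hMinv (add_le_add_right (bil_mono b hb hx hle) a)
    _ = x₀ := hx₀eq
  · rintro ⟨m, l, z, hl, hz, H⟩
    set F : (Fin n → ℝ) → (Fin n → ℝ) := fun x => M⁻¹ *ᵥ (a + b x x) with hF
    set seq : ℕ → (Fin n → ℝ) := fun k => F^[k] 0 with hseq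
    have hsucc : ∀ k, seq (k + 1) = F (seq k) := fun k => Function.iterate_succ_apply' F k 0
    have hFnonneg : ∀ x : Fin n → ℝ, 0 ≤ x → 0 ≤ F x := fun x hx =>
      mulVec_entrywise_nonneg hMinv (add_nonneg ha (hb x x hx hx))
    have hFmono : ∀ x y : Fin n → ℝ, 0 ≤ x → x ≤ y → F x ≤ F y := fun x y hx hxy =>
      mulVec_entrywise_mono hMinv (add_le_add_right (bil_mono b hb hx hxy) a)
    have hinv : ∀ k, 0 ≤ seq k ∧ seq k ≤ seq (k + 1) ∧ l (seq k) ≤ z := by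
      intro k
      induction k with
      | zero =>
        refine ⟨le_rfl, ?_, ?_⟩
        · show seq 0 ≤ seq (0 + 1)
          rw [hsucc 0]
          exact hFnonneg (seq 0) le_rfl
        · show l (seq 0) ≤ z
          rw [show seq 0 = 0 from rfl, map_zero]
          exact hz
      | succ k ih =>
        obtain ⟨h0, h01, hlz⟩ := ih
        have h0' : 0 ≤ seq (k + 1) := h0.trans h01
        have hlz' : l (seq (k + 1)) ≤ z := by
          rw [hsucc k]
          exact H (seq k) h0 hlz
        refine ⟨h0', ?_, hlz'⟩
        rw [hsucc k, hsucc (k + 1)]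
        exact hFmono _ _ h0 h01
    have hmono : ∀ i, Monotone fun k => seq k i :=
      fun i => monotone_nat_of_le_succ fun k => Pi.le_def.mp (hinv k).2.1 i
    obtain ⟨c, hc, hcb⟩ := weaklyPos_bound hl
    have hbdd : ∀ k i, seq k i ≤ (∑ j, z j) / c := by
      intro k i
      have h1 : c * ∑ i, seq k i ≤ ∑ j, l (seq k) j := hcb _ (hinv k).1
      have h2 : ∑ j, l (seq k) j ≤ ∑ j, z j :=
        Finset.sum_le_sum fun j _ => Pi.le_def.mp (hinv k).2.2 j
      have h3 : seq k i ≤ ∑ i', seq k i' :=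
        Finset.single_le_sum (fun i' _ => Pi.le_def.mp (hinv k).1 i') (Finset.mem_univ i)
      rw [le_div_iff₀ hc]
      nlinarith
    set xs : Fin n → ℝ := fun i => ⨆ k, seq k i with hxs
    have hbddab : ∀ i, BddAbove (Set.range fun k => seq k i) :=
      fun i => ⟨(∑ j, z j) / c, by rintro y ⟨k, rfl⟩; exact hbdd k i⟩
    have htendi : ∀ i, Tendsto (fun k => seq k i) atTop (𝓝 (xs i)) :=
      fun i => tendsto_atTop_ciSup (hmono i) (hbddab i)
    have htend : Tendsto seq atTop (𝓝 xs) := tendsto_pi_nhds.mpr htendi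
    have hxs0 : 0 ≤ xs := by
      rw [Pi.le_def]
      intro i
      have h4 := le_ciSup (hbddab i) 0
      exact h4
    have hFcont : Continuous F := by
      have h1 : Continuous fun x : Fin n → ℝ => a + b x x :=
        continuous_const.add (bil_self_continuous b)
      have h2 : Continuous (M⁻¹.mulVecLin) := (M⁻¹.mulVecLin).continuous_of_finiteDimensional
      exact h2.comp h1
    have hfix : F xs = xs := by
      have h1 : Tendsto (fun k => seq (k + 1)) atTop (𝓝 xs) :=
        htend.comp (tendsto_add_atTop_nat 1)
      have h2 : Tendsto (fun k => F (seq k)) atTop (𝓝 (F xs)) :=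
        (hFcont.tendsto xs).comp htend
      have h3 : (fun k => seq (k + 1)) = fun k => F (seq k) := funext hsucc
      rw [h3] at h1
      exact tendsto_nhds_unique h2 h1
    refine ⟨xs, hxs0, ?_⟩
    have h5 := congrArg (fun v => M *ᵥ v) hfix
    simp only [hF] at h5
    rw [Matrix.mulVec_mulVec, Matrix.mul_nonsing_inv _ hdet, Matrix.one_mulVec] at h5
    exact h5.symm
end

section
/- If there exists a vector y ≥ 0 such that F(y) ≥ 0 (that is, My ≥ a + b(y,y)), then the QVE Mx = a + b(x,x) has a minimal nonnegative solution x*, and x* ≤ y. -/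
open Matrix Filter Topology

/-- If there exists `y ≥ 0` with `F(y) ≥ 0`, i.e. `M y ≥ a + b(y,y)`, then the QVE
`M x = a + b(x,x)` has a minimal nonnegative solution `x*`, and `x* ≤ y`. -/
theorem qve_minimal_solution_of_supersolution {n : ℕ} (M : Matrix (Fin n) (Fin n) ℝ)
    (hM : IsNsMMat M) (a : Fin n → ℝ) (ha : 0 ≤ a)
    (b : (Fin n → ℝ) →ₗ[ℝ] (Fin n → ℝ) →ₗ[ℝ] (Fin n → ℝ))
    (hb : ∀ x y : Fin n → ℝ, 0 ≤ x → 0 ≤ y → 0 ≤ b x y)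
    (y : Fin n → ℝ) (hy : 0 ≤ y) (hFy : a + b y y ≤ M *ᵥ y) :
    ∃ xs : Fin n → ℝ, 0 ≤ xs ∧ M *ᵥ xs = a + b xs xs ∧
      (∀ s : Fin n → ℝ, 0 ≤ s → M *ᵥ s = a + b s s → xs ≤ s) ∧ xs ≤ y := by
  rcases Nat.eq_zero_or_pos n with hn | hn
  · subst hn
    exact ⟨0, le_refl _, funext fun i => i.elim0, fun s hs _ i => i.elim0,
      fun i => i.elim0⟩
  obtain ⟨⟨s, P, hP, hspec, hMeq⟩, hdet⟩ := hM
  haveI : Nonempty (Fin n) := ⟨⟨0, hn⟩⟩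
  -- the complexification of P
  set A : Matrix (Fin n) (Fin n) ℂ := P.map (Complex.ofReal) with hA
  -- a complex eigenvalue of P exists
  obtain ⟨μ, hμ⟩ := Module.End.exists_eigenvalue
    ((Matrix.toLinAlgEquiv (Pi.basisFun ℂ (Fin n))) A)
  have hμspec : μ ∈ spectrum ℂ A := by
    rw [← AlgEquiv.spectrum_eq (Matrix.toLinAlgEquiv (Pi.basisFun ℂ (Fin n))) A]
    exact Module.End.hasEigenvalue_iff_mem_spectrum.mp hμ
  have hbdd : BddAbove {r : ℝ | ∃ ν ∈ spectrum ℂ A, ‖ν‖ = r} := by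
    have heq : {r : ℝ | ∃ ν ∈ spectrum ℂ A, ‖ν‖ = r} = (fun ν => ‖ν‖) '' spectrum ℂ A := by
      ext r
      simp [Set.mem_image]
    rw [heq]
    exact ((Matrix.finite_spectrum A).image _).bddAbove
  have hnorm_le : ‖μ‖ ≤ s := by
    refine le_trans (le_trans (le_csSup hbdd ⟨μ, hμspec, rfl⟩) ?_) hspec
    exact le_of_eq rfl
  have hs0 : 0 ≤ s := le_trans (norm_nonneg μ) hnorm_le
  -- s is positive: otherwise det M = 0
  have hspos : 0 < s := by
    rcases lt_or_eq_of_le hs0 with h | h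
    · exact h
    exfalso
    have hμ0 : μ = 0 := norm_eq_zero.mp (le_antisymm (h ▸ hnorm_le) (norm_nonneg μ))
    have h0spec : (0 : ℂ) ∈ spectrum ℂ A := hμ0 ▸ hμspec
    have hnunit : ¬ IsUnit A := (spectrum.zero_mem_iff (R := ℂ)).mp h0spec
    apply hnunit
    rw [Matrix.isUnit_iff_isUnit_det]
    have hdetA : A.det = Complex.ofReal (P.det) :=
      (RingHom.map_det Complex.ofRealHom P).symm
    rw [hdetA]
    have hMP : M = -P := by rw [hMeq, ← h]; simp
    have : M.det = (-1) ^ (Fintype.card (Fin n)) * P.det := by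
      rw [hMP, Matrix.det_neg]
    rw [this] at hdet
    have hPdet : P.det ≠ 0 := by
      intro hz
      rw [hz, mul_zero] at hdet
      simp at hdet
    simpa [isUnit_iff_ne_zero] using hPdet
  -- the iteration map
  set g : (Fin n → ℝ) → (Fin n → ℝ) := fun x => s⁻¹ • (P *ᵥ x + a + b x x) with hg
  -- M *ᵥ x in terms of s and P
  have hMv : ∀ x : Fin n → ℝ, M *ᵥ x = s • x - P *ᵥ x := by
    intro x
    rw [hMeq, Matrix.sub_mulVec, Matrix.smul_mulVec, Matrix.one_mulVec]
  -- monotonicity of mulVec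
  have hPmono : ∀ u v : Fin n → ℝ, u ≤ v → P *ᵥ u ≤ P *ᵥ v := by
    intro u v huv i
    simp only [Matrix.mulVec, dotProduct]
    exact Finset.sum_le_sum fun j _ => mul_le_mul_of_nonneg_left (huv j) (hP i j)
  -- monotonicity of x ↦ b x x on nonnegative vectors
  have hbmono : ∀ u v : Fin n → ℝ, 0 ≤ u → u ≤ v → b u u ≤ b v v := by
    intro u v hu huv
    have hv : 0 ≤ v := le_trans hu huv
    have hvu : 0 ≤ v - u := by simpa [sub_nonneg] using huv
    have h1 : b u u ≤ b u v := by
      intro i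
      have h := hb u (v - u) hu hvu i
      simp only [map_sub, LinearMap.sub_apply, Pi.sub_apply, Pi.zero_apply] at h
      linarith
    have h2 : b u v ≤ b v v := by
      intro i
      have h := hb (v - u) v hvu hv i
      simp only [map_sub, LinearMap.sub_apply, Pi.sub_apply, Pi.zero_apply] at h
      linarith
    exact le_trans h1 h2
  -- monotonicity of g on nonnegative vectors
  have hgmono : ∀ u v : Fin n → ℝ, 0 ≤ u → u ≤ v → g u ≤ g v := by
    intro u v hu huv i
    simp only [hg, Pi.smul_apply, smul_eq_mul]
    refine mul_le_mul_of_nonneg_left ?_ (inv_nonneg.mpr hs0)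
    have h1 := hPmono u v huv i
    have h2 := hbmono u v hu huv i
    simp only [Pi.add_apply]
    linarith
  -- g preserves nonnegativity
  have hgnn : ∀ x : Fin n → ℝ, 0 ≤ x → 0 ≤ g x := by
    intro x hx i
    simp only [hg, Pi.smul_apply, smul_eq_mul]
    have h1 : 0 ≤ (P *ᵥ x) i := by
      simp only [Matrix.mulVec, dotProduct]
      exact Finset.sum_nonneg fun j _ => mul_nonneg (hP i j) (hx j)
    have h2 := ha i
    have h3 := hb x x hx hx i
    have := mul_nonneg (inv_nonneg.mpr hs0) (by simpa using add_nonneg (add_nonneg h1 h2) h3)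
    simpa using this
  -- g y ≤ y
  have hgy : g y ≤ y := by
    intro i
    have hFyi := hFy i
    rw [hMv y] at hFyi
    simp only [Pi.add_apply, Pi.sub_apply, Pi.smul_apply, smul_eq_mul] at hFyi
    simp only [hg, Pi.smul_apply, smul_eq_mul, Pi.add_apply]
    rw [inv_mul_le_iff₀ hspos]
    linarith
  -- solutions are exactly fixed points of g
  have hfix_of_sol : ∀ t : Fin n → ℝ, M *ᵥ t = a + b t t → g t = t := by
    intro t ht
    have := hMv t
    rw [ht] at this
    funext i
    have hi := congrFun this i
    simp only [Pi.add_apply, Pi.sub_apply, Pi.smul_apply, smul_eq_mul] at hi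
    simp only [hg, Pi.smul_apply, smul_eq_mul, Pi.add_apply]
    field_simp
    linarith
  have hsol_of_fix : ∀ t : Fin n → ℝ, g t = t → M *ᵥ t = a + b t t := by
    intro t ht
    rw [hMv t]
    funext i
    have hi := congrFun ht i
    simp only [hg, Pi.smul_apply, smul_eq_mul, Pi.add_apply] at hi
    simp only [Pi.add_apply, Pi.sub_apply, Pi.smul_apply, smul_eq_mul]
    have : (P *ᵥ t) i + a i + (b t t) i = s * t i := by
      have := congrArg (fun r => s * r) hi
      rw [← mul_assoc, mul_inv_cancel₀ (ne_of_gt hspos), one_mul] at this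
      exact this
    linarith
  -- set up the complete lattice on [0, y]
  haveI hFact : Fact ((0 : Fin n → ℝ) ≤ y) := ⟨hy⟩
  have hmem : ∀ x : Set.Icc (0 : Fin n → ℝ) y, g x.1 ∈ Set.Icc (0 : Fin n → ℝ) y :=
    fun x => ⟨hgnn x.1 x.2.1, le_trans (hgmono x.1 y x.2.1 x.2.2) hgy⟩
  set G : Set.Icc (0 : Fin n → ℝ) y →o Set.Icc (0 : Fin n → ℝ) y :=
    ⟨fun x => ⟨g x.1, hmem x⟩, by
      intro u v huv
      exact Subtype.coe_le_coe.mp (by exact hgmono u.1 v.1 u.2.1 huv)⟩ with hG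
  set xsSub := OrderHom.lfp G with hxs
  have hfixed : G xsSub = xsSub := OrderHom.map_lfp G
  have hgfix : g xsSub.1 = xsSub.1 := congrArg Subtype.val hfixed
  refine ⟨xsSub.1, xsSub.2.1, hsol_of_fix _ hgfix, ?_, xsSub.2.2⟩
  -- minimality
  intro t ht htsol
  have hgt : g t = t := hfix_of_sol t htsol
  set u : Fin n → ℝ := t ⊓ y with hu
  have hu0 : 0 ≤ u := le_inf ht hy
  have huy : u ≤ y := inf_le_right
  have hut : u ≤ t := inf_le_left
  have hgu : g u ≤ u := by
    refine le_inf ?_ ?_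
    · calc g u ≤ g t := hgmono u t hu0 hut
        _ = t := hgt
    · exact le_trans (hgmono u y hu0 huy) hgy
  have husub : u ∈ Set.Icc (0 : Fin n → ℝ) y := ⟨hu0, huy⟩
  have hle : G ⟨u, husub⟩ ≤ ⟨u, husub⟩ := Subtype.coe_le_coe.mp (by exact hgu)
  have := OrderHom.lfp_le G hle
  exact le_trans (Subtype.coe_le_coe.mpr this) hut
end

section
/- Let A be an m₁×m₁ nonsingular matrix with A⁻¹ ≥ 0, D an m₂×m₂ matrix, B an m₁×m₂ matrix with B ≥ 0, and C an m₂×m₁ matrix with C ≥ 0. Suppose there exist vectors v₁ ∈ ℝ^{m₂}, v₂ ∈ ℝ^{m₁} with v₁ > 0, v₂ > 0 such that u₂ := Av₂ − Bv₁ ≥ 0 and Dv₁ − Cv₂ ≥ 0. If X, X' are m₁×m₂ matrices with 0 ≤ X ≤ X', X v₁ ≤ v₂ − A⁻¹u₂, and A X' + X' D = B + X C X, then X' v₁ ≤ v₂ − A⁻¹u₂. -/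
open Matrix

private lemma mulVec_mono_vec {n m : ℕ} (M : Matrix (Fin n) (Fin m) ℝ)
    (hM : ∀ i j, 0 ≤ M i j) {x y : Fin m → ℝ} (h : x ≤ y) :
    M *ᵥ x ≤ M *ᵥ y := by
  intro i
  simp only [mulVec, dotProduct]
  exact Finset.sum_le_sum fun j _ => mul_le_mul_of_nonneg_left (h j) (hM i j)

private lemma mulVec_mono_mat {n m : ℕ} {M N : Matrix (Fin n) (Fin m) ℝ}
    (h : ∀ i j, M i j ≤ N i j) {y : Fin m → ℝ} (hy : 0 ≤ y) :
    M *ᵥ y ≤ N *ᵥ y := by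
  intro i
  simp only [mulVec, dotProduct]
  exact Finset.sum_le_sum fun j _ => mul_le_mul_of_nonneg_right (h i j) (hy j)

private lemma mulVec_nonneg' {n m : ℕ} (M : Matrix (Fin n) (Fin m) ℝ)
    (hM : ∀ i j, 0 ≤ M i j) {x : Fin m → ℝ} (hx : 0 ≤ x) :
    0 ≤ M *ᵥ x := by
  intro i
  simp only [mulVec, dotProduct, Pi.zero_apply]
  exact Finset.sum_nonneg fun j _ => mul_nonneg (hM i j) (hx j)

/-- Induction step for the fixed-point iteration
`A X_{k+1} + X_{k+1} D = B + X_k C X_k` of the nonsymmetric algebraic Riccati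
equation: if `0 ≤ X ≤ X'` entrywise, `X v₁ ≤ v₂ - A⁻¹ u₂` where
`u₂ = A v₂ - B v₁ ≥ 0` and `D v₁ - C v₂ ≥ 0` with `v₁, v₂ > 0`, `A⁻¹ ≥ 0`,
`B, C ≥ 0`, and `A X' + X' D = B + X C X`, then `X' v₁ ≤ v₂ - A⁻¹ u₂`. -/
theorem nare_iterate_bounded {m₁ m₂ : ℕ}
    (A : Matrix (Fin m₁) (Fin m₁) ℝ) (D : Matrix (Fin m₂) (Fin m₂) ℝ)
    (B : Matrix (Fin m₁) (Fin m₂) ℝ) (C : Matrix (Fin m₂) (Fin m₁) ℝ)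
    (hA : IsUnit A.det) (hAinv : ∀ i j, 0 ≤ A⁻¹ i j)
    (hB : ∀ i j, 0 ≤ B i j) (hC : ∀ i j, 0 ≤ C i j)
    (v₁ : Fin m₂ → ℝ) (v₂ : Fin m₁ → ℝ)
    (hv₁ : ∀ i, 0 < v₁ i) (hv₂ : ∀ i, 0 < v₂ i)
    (hu₂ : 0 ≤ A *ᵥ v₂ - B *ᵥ v₁) (hu₁ : 0 ≤ D *ᵥ v₁ - C *ᵥ v₂)
    (X X' : Matrix (Fin m₁) (Fin m₂) ℝ)
    (hX : ∀ i j, 0 ≤ X i j) (hXX' : ∀ i j, X i j ≤ X' i j)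
    (hbound : X *ᵥ v₁ ≤ v₂ - A⁻¹ *ᵥ (A *ᵥ v₂ - B *ᵥ v₁))
    (heq : A * X' + X' * D = B + X * C * X) :
    X' *ᵥ v₁ ≤ v₂ - A⁻¹ *ᵥ (A *ᵥ v₂ - B *ᵥ v₁) := by
  have hAiA : A⁻¹ * A = 1 := nonsing_inv_mul A hA
  -- rewrite the bound as A⁻¹ (B v₁)
  have hkey : v₂ - A⁻¹ *ᵥ (A *ᵥ v₂ - B *ᵥ v₁) = A⁻¹ *ᵥ (B *ᵥ v₁) := by
    rw [mulVec_sub, mulVec_mulVec, hAiA, one_mulVec]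
    abel
  rw [hkey] at hbound ⊢
  have hX'nn : ∀ i j, 0 ≤ X' i j := fun i j => (hX i j).trans (hXX' i j)
  -- X v₁ ≤ v₂
  have h1 : X *ᵥ v₁ ≤ v₂ := by
    refine hbound.trans ?_
    have := mulVec_nonneg' A⁻¹ hAinv hu₂
    intro i
    have h2 := this i
    have : A⁻¹ *ᵥ (A *ᵥ v₂ - B *ᵥ v₁) = v₂ - A⁻¹ *ᵥ (B *ᵥ v₁) := by
      rw [mulVec_sub, mulVec_mulVec, hAiA, one_mulVec]
    rw [this] at h2
    simpa using h2
  have hCv₂ : (0 : Fin m₂ → ℝ) ≤ C *ᵥ v₂ :=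
    mulVec_nonneg' C hC (fun i => (hv₂ i).le)
  have h2 : X *ᵥ (C *ᵥ (X *ᵥ v₁)) ≤ X' *ᵥ (D *ᵥ v₁) := by
    calc X *ᵥ (C *ᵥ (X *ᵥ v₁)) ≤ X *ᵥ (C *ᵥ v₂) :=
          mulVec_mono_vec X hX (mulVec_mono_vec C hC h1)
      _ ≤ X' *ᵥ (C *ᵥ v₂) := mulVec_mono_mat hXX' hCv₂
      _ ≤ X' *ᵥ (D *ᵥ v₁) := by
          refine mulVec_mono_vec X' hX'nn ?_
          intro i
          have := hu₁ i
          simpa [sub_nonneg] using this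
  -- apply heq to v₁
  have heqv := congrArg (fun M => M *ᵥ v₁) heq
  simp only [add_mulVec, ← mulVec_mulVec] at heqv
  have h3 : A *ᵥ (X' *ᵥ v₁) ≤ B *ᵥ v₁ := by
    intro i
    have h4 := congrFun heqv i
    simp only [Pi.add_apply] at h4
    have := h2 i
    linarith
  calc X' *ᵥ v₁ = A⁻¹ *ᵥ (A *ᵥ (X' *ᵥ v₁)) := by
        rw [mulVec_mulVec, hAiA, one_mulVec]
    _ ≤ A⁻¹ *ᵥ (B *ᵥ v₁) := mulVec_mono_vec A⁻¹ hAinv h3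
end

section
/- Let a ∈ ℝⁿ with a ≥ 0, let P be an n×n matrix with P ≥ 0, and let b : ℝⁿ × ℝⁿ → ℝⁿ be bilinear with b(x,y) ≥ 0 whenever x, y ≥ 0. Let (x_k) be generated by the fixed-point iteration x_{k+1} = a + P x_k + b(x_k, x_k) from some x₀ ≥ 0, and suppose (x_k) is entrywise nondecreasing and converges to a limit x* with x* > x₀ (strict entrywise inequality). Then ρ(P + b(x*,·) + b(·,x*)) ≤ 1, where P + b(x*,·) + b(·,x*) denotes the matrix of the linear map w ↦ Pw + b(x*, w) + b(w, x*) and ρ denotes the spectral radius. -/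
open Matrix Filter Topology

/-- If the fixed-point iteration `x_{k+1} = a + P x_k + b(x_k, x_k)` (with `a ≥ 0`,
`P ≥ 0`, `b` bilinear nonnegative) is nondecreasing and converges to `x* > x₀`, then
the spectral radius of the Fréchet derivative `P + b(x*,·) + b(·,x*)` of the
iteration map at `x*` is at most `1`. -/
theorem fixed_point_derivative_specRad_le_one {n : ℕ}
    (a : Fin n → ℝ) (ha : 0 ≤ a)
    (P : Matrix (Fin n) (Fin n) ℝ) (hP : ∀ i j, 0 ≤ P i j)
    (b : (Fin n → ℝ) →ₗ[ℝ] (Fin n → ℝ) →ₗ[ℝ] (Fin n → ℝ))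
    (hb : ∀ x y : Fin n → ℝ, 0 ≤ x → 0 ≤ y → 0 ≤ b x y)
    (x : ℕ → Fin n → ℝ) (hx0 : 0 ≤ x 0)
    (hrec : ∀ k, x (k + 1) = a + P *ᵥ x k + b (x k) (x k))
    (hmono : Monotone x) (xs : Fin n → ℝ)
    (hlim : Filter.Tendsto x Filter.atTop (nhds xs))
    (hstrict : ∀ i, x 0 i < xs i) :
    specRad (P + LinearMap.toMatrix' (b xs) + LinearMap.toMatrix' (b.flip xs)) ≤ 1 := by
  classical
  set A : Matrix (Fin n) (Fin n) ℝ :=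
    P + LinearMap.toMatrix' (b xs) + LinearMap.toMatrix' (b.flip xs) with hAdef
  -- basic positivity facts
  have hxle : ∀ k i, x k i ≤ xs i := fun k i =>
    Monotone.ge_of_tendsto (fun p q hpq => hmono hpq i) (tendsto_pi_nhds.mp hlim i) k
  have hxknn : ∀ k, 0 ≤ x k := fun k => le_trans hx0 (hmono (Nat.zero_le k))
  have hxsnn : 0 ≤ xs := fun i => le_trans (hxknn 0 i) (hxle 0 i)
  have hxspos : ∀ i, 0 < xs i := fun i => lt_of_le_of_lt (hx0 i) (hstrict i)
  set d : ℕ → Fin n → ℝ := fun k => xs - x k with hddef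
  have hdapp : ∀ k i, d k i = xs i - x k i := fun k i => rfl
  have hdnn : ∀ k, 0 ≤ d k := fun k i => sub_nonneg.mpr (hxle k i)
  have hdnnc : ∀ k l, (0 : ℝ) ≤ d k l := fun k l => by simpa using hdnn k l
  have hdle : ∀ k l, k ≤ l → ∀ i, d l i ≤ d k i := fun k l hkl i =>
    sub_le_sub_left (hmono hkl i) _
  have hmv : ∀ (M : Matrix (Fin n) (Fin n) ℝ) (w : Fin n → ℝ) (i : Fin n),
      (M *ᵥ w) i = ∑ l, M i l * w l := fun _ _ _ => rfl
  have hPnn : ∀ w : Fin n → ℝ, 0 ≤ w → 0 ≤ P *ᵥ w := fun w hw i => by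
    rw [hmv]
    exact Finset.sum_nonneg fun j _ => mul_nonneg (hP i j) (hw j)
  have hAmul : ∀ w : Fin n → ℝ, A *ᵥ w = P *ᵥ w + b xs w + b w xs := by
    intro w
    have h1 : (LinearMap.toMatrix' (b xs)) *ᵥ w = b xs w := by
      rw [← Matrix.toLin'_apply, Matrix.toLin'_toMatrix']
    have h2 : (LinearMap.toMatrix' (b.flip xs)) *ᵥ w = b w xs := by
      rw [← Matrix.toLin'_apply, Matrix.toLin'_toMatrix']; rfl
    rw [hAdef, Matrix.add_mulVec, Matrix.add_mulVec, h1, h2]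
  have hbc : ∀ (y z : Fin n → ℝ), 0 ≤ y → 0 ≤ z → ∀ i, (0 : ℝ) ≤ b y z i :=
    fun y z hy hz i => by simpa using hb y z hy hz i
  have hPnnc : ∀ (w : Fin n → ℝ), 0 ≤ w → ∀ i, (0 : ℝ) ≤ (P *ᵥ w) i := fun w hw i => by
    simpa using hPnn w hw i
  have hAnn : ∀ w : Fin n → ℝ, 0 ≤ w → 0 ≤ A *ᵥ w := by
    intro w hw
    rw [hAmul]
    intro i
    have h1 := hPnnc w hw i
    have h2 := hbc xs w hxsnn hw i
    have h3 := hbc w xs hw hxsnn i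
    simp only [Pi.add_apply, Pi.zero_apply]
    linarith
  have hAnnc : ∀ w : Fin n → ℝ, 0 ≤ w → ∀ i, (0 : ℝ) ≤ (A *ᵥ w) i :=
    fun w hw i => by simpa using hAnn w hw i
  -- fixed point equation
  have hfix : xs = a + P *ᵥ xs + b xs xs := by
    have hBc : Continuous fun y : Fin n → ℝ =>
        (LinearMap.toMatrix'.toLinearMap.comp b : (Fin n → ℝ) →ₗ[ℝ] Matrix (Fin n) (Fin n) ℝ) y :=
      LinearMap.continuous_of_finiteDimensional _
    have hbyy : ∀ y : Fin n → ℝ, b y y =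
        ((LinearMap.toMatrix'.toLinearMap.comp b) y) *ᵥ y := by
      intro y
      rw [← Matrix.toLin'_apply]
      simp [Matrix.toLin'_toMatrix']
    have hcont : Continuous fun y : Fin n → ℝ => a + P *ᵥ y + b y y := by
      have h1 : Continuous fun y : Fin n → ℝ => P *ᵥ y :=
        continuous_pi fun i => by
          simp only [hmv]
          exact continuous_finset_sum _ fun j _ =>
            (continuous_const.mul (continuous_apply j))
      have h2 : Continuous fun y : Fin n → ℝ => b y y := by
        simp only [hbyy]
        refine continuous_pi fun i => ?_
        simp only [hmv]
        refine continuous_finset_sum _ fun j _ => ?_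
        exact ((continuous_apply j).comp ((continuous_apply i).comp hBc)).mul
          (continuous_apply j)
      exact (continuous_const.add h1).add h2
    have h1 : Tendsto (fun k => x (k + 1)) atTop (𝓝 xs) :=
      hlim.comp (Filter.tendsto_add_atTop_nat 1)
    have h2 : Tendsto (fun k => x (k + 1)) atTop (𝓝 (a + P *ᵥ xs + b xs xs)) := by
      have := (hcont.tendsto xs).comp hlim
      simpa [Function.comp_def, hrec] using this
    exact tendsto_nhds_unique h1 h2
  -- recurrences for d
  have hdrec : ∀ k, d (k + 1) = P *ᵥ d k + b (d k) xs + b (x k) (d k) := by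
    intro k
    have e1 : P *ᵥ (xs - x k) = P *ᵥ xs - P *ᵥ x k := Matrix.mulVec_sub P xs (x k)
    have e2 : b (xs - x k) xs = b xs xs - b (x k) xs := by
      rw [map_sub]; rfl
    have e3 : b (x k) (xs - x k) = b (x k) xs - b (x k) (x k) := map_sub _ _ _
    have hstart : d (k + 1) = xs - (a + P *ᵥ x k + b (x k) (x k)) := by
      rw [← hrec k]
    rw [hstart]
    show xs - (a + P *ᵥ x k + b (x k) (x k)) =
      P *ᵥ (xs - x k) + b (xs - x k) xs + b (x k) (xs - x k)
    rw [e1, e2, e3]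
    nth_rewrite 1 [hfix]
    abel
  have hdrec2 : ∀ k, d (k + 1) = A *ᵥ d k - b (d k) (d k) := by
    intro k
    have hxsplit : xs = x k + d k := by
      funext i
      simp only [Pi.add_apply, hdapp]; ring
    have e : b xs (d k) = b (x k) (d k) + b (d k) (d k) := by
      nth_rewrite 1 [hxsplit]
      rw [map_add]; rfl
    rw [hdrec k, hAmul (d k), e]
    abel
  have hdlim : ∀ i, Tendsto (fun k => d k i) atTop (𝓝 0) := by
    intro i
    have h := Tendsto.sub (tendsto_const_nhds : Tendsto (fun _ : ℕ => xs i) atTop (𝓝 (xs i)))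
      (tendsto_pi_nhds.mp hlim i)
    simpa [hdapp, sub_self] using h
  -- basis expansion lemmas
  have hsnn : ∀ l, (0 : Fin n → ℝ) ≤ Pi.single l (1 : ℝ) := fun l i => by
    show (0 : ℝ) ≤ (Pi.single l 1 : Fin n → ℝ) i
    rcases eq_or_ne i l with h | h <;> simp [Pi.single_apply, h]
  have hw : ∀ w : Fin n → ℝ, w = ∑ l, w l • (Pi.single l 1 : Fin n → ℝ) := by
    intro w
    conv_lhs => rw [← Finset.univ_sum_single w]
    refine Finset.sum_congr rfl fun l _ => ?_
    funext j
    show (Pi.single l (w l) : Fin n → ℝ) j = w l * (Pi.single l 1 : Fin n → ℝ) j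
    rcases eq_or_ne j l with h | h <;> simp [Pi.single_apply, h]
  have hexp1 : ∀ (w y : Fin n → ℝ) (i : Fin n),
      b w y i = ∑ l, w l * b (Pi.single l 1) y i := by
    intro w y i
    nth_rewrite 1 [hw w]
    rw [map_sum]
    simp [Finset.sum_apply]
  have hexp2 : ∀ (y w : Fin n → ℝ) (i : Fin n),
      b y w i = ∑ l, w l * b y (Pi.single l 1) i := by
    intro y w i
    nth_rewrite 1 [hw w]
    rw [map_sum]
    simp [Finset.sum_apply]
  -- entries of A
  have hAentry : ∀ i j, A i j = P i j + b xs (Pi.single j 1) i + b (Pi.single j 1) xs i := by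
    intro i j
    have h := congrFun (hAmul (Pi.single j 1)) i
    simp only [Matrix.mulVec_single, mul_one, Pi.add_apply, MulOpposite.op_one, one_smul, Matrix.col_apply] at h
    exact h
  have hAijnn : ∀ i j, 0 ≤ A i j := by
    intro i j
    rw [hAentry]
    have h1 := hbc xs (Pi.single j 1) hxsnn (hsnn j) i
    have h2 := hbc (Pi.single j 1) xs (hsnn j) hxsnn i
    have h3 := hP i j
    linarith
  -- the key structural lemma
  have hzero : ∀ k i j, d (k + 1) i = 0 → 0 < d k j → A i j = 0 := by
    intro k i j hdz hdj
    have h := congrFun (hdrec k) i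
    simp only [Pi.add_apply] at h
    rw [hdz] at h
    have hP1 : 0 ≤ (P *ᵥ d k) i := hPnnc (d k) (hdnn k) i
    have hb1 : 0 ≤ b (d k) xs i := hbc (d k) xs (hdnn k) hxsnn i
    have hb2 : 0 ≤ b (x k) (d k) i := hbc (x k) (d k) (hxknn k) (hdnn k) i
    have h1 : (P *ᵥ d k) i = 0 := by linarith
    have h2 : b (d k) xs i = 0 := by linarith
    have h3 : b (x k) (d k) i = 0 := by linarith
    -- P i j = 0
    have hPij : P i j = 0 := by
      rw [hmv] at h1
      have := (Finset.sum_eq_zero_iff_of_nonneg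
        (fun l _ => mul_nonneg (hP i l) (hdnnc k l))).mp h1 j (Finset.mem_univ j)
      rcases mul_eq_zero.mp this with h' | h'
      · exact h'
      · exact absurd h' (ne_of_gt hdj)
    -- b (e l) xs i = 0 whenever d k l > 0
    have hblxs : ∀ l, 0 < d k l → b (Pi.single l 1) xs i = 0 := by
      intro l hl
      rw [hexp1 (d k) xs i] at h2
      have := (Finset.sum_eq_zero_iff_of_nonneg
        (fun l' _ => mul_nonneg (hdnnc k l')
          (hb (Pi.single l' 1) xs (hsnn l') hxsnn i))).mp h2 l (Finset.mem_univ l)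
      rcases mul_eq_zero.mp this with h' | h'
      · exact absurd h' (ne_of_gt hl)
      · exact h'
    -- b (e l) (e m) i = 0 whenever d k l > 0
    have hbee : ∀ l, 0 < d k l → ∀ m, b (Pi.single l 1) (Pi.single m 1) i = 0 := by
      intro l hl m
      have h := hblxs l hl
      rw [hexp2 (Pi.single l 1) xs i] at h
      have := (Finset.sum_eq_zero_iff_of_nonneg
        (fun m' _ => mul_nonneg (hxsnn m')
          (hb (Pi.single l 1) (Pi.single m' 1) (hsnn l) (hsnn m') i))).mp h m
          (Finset.mem_univ m)
      rcases mul_eq_zero.mp this with h' | h'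
      · exact absurd h' (ne_of_gt (hxspos m))
      · exact h'
    -- b (x k) (e j) i = 0
    have hxkej : b (x k) (Pi.single j 1) i = 0 := by
      rw [hexp2 (x k) (d k) i] at h3
      have := (Finset.sum_eq_zero_iff_of_nonneg
        (fun l _ => mul_nonneg (hdnnc k l)
          (hb (x k) (Pi.single l 1) (hxknn k) (hsnn l) i))).mp h3 j (Finset.mem_univ j)
      rcases mul_eq_zero.mp this with h' | h'
      · exact absurd h' (ne_of_gt hdj)
      · exact h'
    -- b xs (e j) i = 0
    have hxsej : b xs (Pi.single j 1) i = 0 := by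
      have hsplit : xs = x k + d k := by
        funext i'
        simp only [Pi.add_apply, hdapp]; ring
      have e : b xs (Pi.single j 1) i = b (x k) (Pi.single j 1) i + b (d k) (Pi.single j 1) i := by
        nth_rewrite 1 [hsplit]
        rw [map_add]; rfl
      rw [e, hxkej, zero_add, hexp1 (d k) (Pi.single j 1) i]
      refine Finset.sum_eq_zero fun l _ => ?_
      rcases eq_or_lt_of_le (hdnnc k l) with h' | h'
      · rw [← h', zero_mul]
      · rw [hbee l h' j, mul_zero]
    rw [hAentry, hPij, hxsej, hblxs j hdj]
    ring
  -- now the spectral estimate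
  refine Real.sSup_le ?_ zero_le_one
  rintro r ⟨μ, hμ, rfl⟩
  by_contra hcon
  push_neg at hcon
  have hμne : μ ≠ 0 := by
    intro h
    rw [h, norm_zero] at hcon
    linarith
  -- eigenvector
  have hdet : (algebraMap ℂ (Matrix (Fin n) (Fin n) ℂ) μ - A.map Complex.ofReal).det = 0 := by
    have h := spectrum.mem_iff.mp hμ
    by_contra hne
    exact h ((Matrix.isUnit_iff_isUnit_det _).mpr (isUnit_iff_ne_zero.mpr hne))
  obtain ⟨v, hv0, hveq⟩ := Matrix.exists_mulVec_eq_zero_iff.mpr hdet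
  have heig : (A.map Complex.ofReal) *ᵥ v = μ • v := by
    rw [Matrix.sub_mulVec] at hveq
    have h2 : (algebraMap ℂ (Matrix (Fin n) (Fin n) ℂ) μ) *ᵥ v = μ • v := by
      rw [Algebra.algebraMap_eq_smul_one, Matrix.smul_mulVec, Matrix.one_mulVec]
    rw [h2] at hveq
    exact (sub_eq_zero.mp hveq).symm
  set u : Fin n → ℝ := fun i => ‖v i‖ with hudef
  have hunn : 0 ≤ u := fun i => norm_nonneg _
  have hmvC : ∀ (i : Fin n), ((A.map Complex.ofReal) *ᵥ v) i = ∑ l, (A i l : ℂ) * v l :=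
    fun _ => rfl
  have heigu : ∀ i, ‖μ‖ * u i ≤ (A *ᵥ u) i := by
    intro i
    calc ‖μ‖ * u i = ‖((A.map Complex.ofReal) *ᵥ v) i‖ := by
          rw [heig]
          simp [hudef, norm_mul]
      _ ≤ ∑ j, ‖(A i j : ℂ) * v j‖ := by
          rw [hmvC]
          exact norm_sum_le _ _
      _ = ∑ j, A i j * u j := by
          refine Finset.sum_congr rfl fun j _ => ?_
          rw [norm_mul, Complex.norm_real, Real.norm_eq_abs, abs_of_nonneg (hAijnn i j)]
      _ = (A *ᵥ u) i := (hmv A u i).symm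
  -- eigenvector vanishes where iteration terminates
  have hvanish : ∀ k i, d k i = 0 → v i = 0 := by
    intro k
    induction k with
    | zero =>
      intro i h
      exact absurd h (by rw [hdapp]; have := hstrict i; intro hc; linarith)
    | succ k ih =>
      intro i h
      have h2 : μ * v i = ∑ j, (A i j : ℂ) * v j := by
        have h := congrFun heig i
        rw [hmvC] at h
        have h4 : (μ • v) i = μ * v i := rfl
        rw [← h4]
        exact h.symm
      have h3 : ∀ j ∈ Finset.univ, (A i j : ℂ) * v j = 0 := by
        intro j _
        rcases eq_or_lt_of_le (hdnnc k j) with hz | hp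
        · rw [ih j hz.symm, mul_zero]
        · rw [hzero k i j h hp]
          simp
      rw [Finset.sum_eq_zero h3] at h2
      rcases mul_eq_zero.mp h2 with h' | h'
      · exact absurd h' hμne
      · exact h'
  have hdpos : ∀ i, 0 < u i → ∀ k, 0 < d k i := by
    intro i hui k
    rcases eq_or_lt_of_le (hdnnc k i) with h | h
    · exfalso
      have := hvanish k i h.symm
      rw [hudef] at hui
      simp only [this, norm_zero] at hui
      exact lt_irrefl 0 hui
    · exact h
  obtain ⟨i0, hi0⟩ := Function.ne_iff.mp hv0
  have hui0 : 0 < u i0 := norm_pos_iff.mpr hi0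
  -- constants
  set ε : ℝ := (‖μ‖ - 1) / (2 * ‖μ‖) with hεdef
  set r' : ℝ := (‖μ‖ + 1) / 2 with hr'def
  have hμpos : 0 < ‖μ‖ := by linarith
  have hεpos : 0 < ε := div_pos (by linarith) (by linarith)
  have hεlt1 : ε < 1 := by
    rw [hεdef, div_lt_one (by linarith)]
    linarith
  have hr'1 : 1 < r' := by rw [hr'def]; linarith
  have hμ0 : ‖μ‖ ≠ 0 := ne_of_gt hμpos
  have hkey : (1 - ε) * ‖μ‖ = r' := by
    rw [hεdef, hr'def]
    have h1 : (‖μ‖ - 1) / (2 * ‖μ‖) * ‖μ‖ = (‖μ‖ - 1) / 2 := by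
      rw [div_mul_eq_mul_div, mul_comm (2:ℝ) ‖μ‖, mul_comm (‖μ‖ - 1) ‖μ‖,
        mul_div_mul_left _ _ hμ0]
    rw [sub_mul, one_mul, h1]
    ring
  -- pick K
  have hev : ∀ᶠ k in atTop, ∀ i, d k i < ε * xs i :=
    eventually_all.mpr fun i =>
      (hdlim i).eventually (gt_mem_nhds (mul_pos hεpos (hxspos i)))
  obtain ⟨K, hK⟩ := hev.exists
  -- pick c
  have hne : Nonempty (Fin n) := ⟨i0⟩
  set c : ℝ := Finset.univ.inf' Finset.univ_nonempty
    (fun i => if u i = 0 then 1 else d K i / u i) with hcdef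
  have hcpos : 0 < c := by
    rw [hcdef, Finset.lt_inf'_iff]
    intro i _
    by_cases h : u i = 0
    · simp [h]
    · have hupos : 0 < u i := lt_of_le_of_ne (hunn i) (Ne.symm h)
      simp only [h, if_false]
      exact div_pos (hdpos i hupos K) hupos
  have hcu : ∀ i, c * u i ≤ d K i := by
    intro i
    by_cases h : u i = 0
    · rw [h, mul_zero]; exact hdnnc K i
    · have hupos : 0 < u i := lt_of_le_of_ne (hunn i) (Ne.symm h)
      have hle := Finset.inf'_le (fun i => if u i = 0 then 1 else d K i / u i)
        (Finset.mem_univ i)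
      rw [if_neg h] at hle
      rw [hcdef]
      exact (le_div_iff₀ hupos).mp hle
  -- main induction
  have hmain : ∀ m i, c * r' ^ m * u i ≤ d (K + m) i := by
    intro m
    induction m with
    | zero =>
      intro i
      simpa using hcu i
    | succ m ih =>
      intro i
      have hDnn : 0 ≤ d (K + m) := hdnn (K + m)
      have hDε : ∀ i', d (K + m) i' ≤ ε * xs i' := fun i' =>
        le_trans (hdle K (K + m) (Nat.le_add_right K m) i') (le_of_lt (hK i'))
      have hADnn : ∀ i', (0:ℝ) ≤ (A *ᵥ d (K + m)) i' := hAnnc _ hDnn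
      -- b D D ≤ ε • (A *ᵥ D)
      have hbDD : b (d (K + m)) (d (K + m)) i ≤ ε * (A *ᵥ d (K + m)) i := by
        have h1 : b (d (K + m)) (d (K + m)) i ≤ b (d (K + m)) (ε • xs) i := by
          have hge : (0 : Fin n → ℝ) ≤ ε • xs - d (K + m) := fun j => by
            have := hDε j
            simp only [Pi.sub_apply, Pi.smul_apply, smul_eq_mul, Pi.zero_apply]
            linarith
          have h0 := hbc (d (K + m)) (ε • xs - d (K + m)) hDnn hge i
          have e : b (d (K + m)) (ε • xs - d (K + m)) =
              b (d (K + m)) (ε • xs) - b (d (K + m)) (d (K + m)) := map_sub _ _ _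
          rw [e] at h0
          simp only [Pi.sub_apply] at h0
          linarith
        have h2 : b (d (K + m)) (ε • xs) i = ε * b (d (K + m)) xs i := by
          rw [_root_.map_smul]; rfl
        have h3 : b (d (K + m)) xs i ≤ (A *ᵥ d (K + m)) i := by
          rw [hAmul]
          have h5 := hPnnc (d (K + m)) hDnn i
          have h6 := hbc xs (d (K + m)) hxsnn hDnn i
          simp only [Pi.add_apply]
          linarith
        calc b (d (K + m)) (d (K + m)) i ≤ ε * b (d (K + m)) xs i := by rw [← h2]; exact h1
          _ ≤ ε * (A *ᵥ d (K + m)) i := mul_le_mul_of_nonneg_left h3 (le_of_lt hεpos)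
      -- A *ᵥ D ≥ (c r'^m) (‖μ‖ u)
      have hAD : c * r' ^ m * (‖μ‖ * u i) ≤ (A *ᵥ d (K + m)) i := by
        have hsubnn : (0 : Fin n → ℝ) ≤ d (K + m) - (c * r' ^ m) • u := fun j => by
          have := ih j
          simp only [Pi.sub_apply, Pi.smul_apply, smul_eq_mul, Pi.zero_apply]
          linarith
        have h0 := hAnnc _ hsubnn i
        have e : A *ᵥ (d (K + m) - (c * r' ^ m) • u) =
            A *ᵥ d (K + m) - (c * r' ^ m) • (A *ᵥ u) := by
          rw [Matrix.mulVec_sub, Matrix.mulVec_smul]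
        rw [e] at h0
        simp only [Pi.sub_apply, Pi.smul_apply, smul_eq_mul] at h0
        have hcrm : 0 ≤ c * r' ^ m := mul_nonneg (le_of_lt hcpos) (pow_nonneg (by linarith) m)
        have := mul_le_mul_of_nonneg_left (heigu i) hcrm
        linarith
      have hstep : d (K + (m + 1)) i = (A *ᵥ d (K + m)) i - b (d (K + m)) (d (K + m)) i := by
        have := congrFun (hdrec2 (K + m)) i
        simp only [Pi.sub_apply] at this
        rw [show K + (m + 1) = (K + m) + 1 from rfl]
        exact this
      have hfin : c * r' ^ (m + 1) * u i = (1 - ε) * (c * r' ^ m * (‖μ‖ * u i)) := by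
        rw [pow_succ, ← hkey]
        ring
      rw [hstep, hfin]
      have h4 : (1 - ε) * (c * r' ^ m * (‖μ‖ * u i)) ≤ (1 - ε) * (A *ᵥ d (K + m)) i :=
        mul_le_mul_of_nonneg_left hAD (by linarith)
      nlinarith [hADnn i]
  -- contradiction
  obtain ⟨m, hm⟩ := pow_unbounded_of_one_lt (d 0 i0 / (c * u i0)) hr'1
  have h1 := hmain m i0
  have h2 : d (K + m) i0 ≤ d 0 i0 := hdle 0 (K + m) (Nat.zero_le _) i0
  rw [div_lt_iff₀ (mul_pos hcpos hui0)] at hm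
  nlinarith
end
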